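/- arXiv:2506.09531 — 4 statements merged into one kernel-verified Lean document; each statement's English description precedes it below -/
import Mathlib

section
/- Let R(z) = A · Π_{i=1}^{s}(z + α_i)^{n_i} / Π_{i=1}^{t}(z + β_i)^{m_i} be a rational function (A ≠ 0, the α_i distinct, the β_i distinct, and no α_i equal to any β_j), and let Q[R] = R^{p_0} (R^{p_1})^{(q_1)} ⋯ (R^{p_k})^{(q_k)} with degree d = p_0 + Σ p_i and weight w = d + Σ q_i. Then Q[R] can be written in the form Q[R](z) = A' · Π_{i=1}^{s}(z + α_i)^{(n_i + 1)d − w} / Π_{i=1}^{t}(z + β_i)^{(m_i − 1)d + w} · G(z), where G is a polynomial of degree at most (s + t − 1)(w − d). -/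
namespace Stmt5Aux

open Polynomial Finset

variable {ι : Type*} [Fintype ι] [DecidableEq ι]

noncomputable def Phi (c : ι → ℂ) : Polynomial ℂ := ∏ i, (X + C (c i))

noncomputable def Lam (c : ι → ℂ) (ν : ι → ℤ) : Polynomial ℂ :=
  ∑ i, C ((ν i : ℂ)) * ∏ i' ∈ Finset.univ.erase i, (X + C (c i'))

noncomputable def Npoly (c : ι → ℂ) (ν : ι → ℤ) (p : ℕ) : ℕ → Polynomial ℂ
  | 0 => 1
  | q + 1 =>
      C (p : ℂ) * Lam c ν * Npoly c ν p q
        - C (q : ℂ) * (Phi c).derivative * Npoly c ν p q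
        + Phi c * (Npoly c ν p q).derivative

lemma derivative_finset_prod {κ : Type*} [DecidableEq κ] (s : Finset κ) (f : κ → Polynomial ℂ) :
    derivative (∏ i ∈ s, f i) = ∑ i ∈ s, (∏ j ∈ s.erase i, f j) * derivative (f i) := by
  classical
  induction s using Finset.induction_on with
  | empty => simp
  | @insert a s ha ih =>
    rw [Finset.prod_insert ha, derivative_mul, ih, Finset.sum_insert ha,
      Finset.erase_insert ha, Finset.mul_sum]
    congr 1
    · ring
    · apply Finset.sum_congr rfl
      intro i hi
      rw [Finset.erase_insert_of_ne (by rintro rfl; exact ha hi),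
        Finset.prod_insert (by simp [ha])]
      ring

lemma natDegree_erase_prod_le (c : ι → ℂ) (i : ι) :
    (∏ i' ∈ Finset.univ.erase i, (X + C (c i'))).natDegree ≤ Fintype.card ι - 1 := by
  refine le_trans (Polynomial.natDegree_prod_le _ _) ?_
  simp [natDegree_X_add_C, Finset.card_erase_of_mem]

lemma natDegree_Phi_le (c : ι → ℂ) : (Phi c).natDegree ≤ Fintype.card ι := by
  refine le_trans (Polynomial.natDegree_prod_le _ _) ?_
  simp [natDegree_X_add_C]

lemma natDegree_Lam_le (c : ι → ℂ) (ν : ι → ℤ) : (Lam c ν).natDegree ≤ Fintype.card ι - 1 := by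
  refine le_trans (Polynomial.natDegree_sum_le _ _) ?_
  rw [Finset.fold_max_le]
  refine ⟨Nat.zero_le _, fun i _ => ?_⟩
  refine le_trans (Polynomial.natDegree_mul_le) ?_
  simpa using natDegree_erase_prod_le c i

lemma natDegree_Phi_derivative_le (c : ι → ℂ) :
    (Phi c).derivative.natDegree ≤ Fintype.card ι - 1 :=
  le_trans (Polynomial.natDegree_derivative_le _) (Nat.sub_le_sub_right (natDegree_Phi_le c) 1)

lemma natDegree_Npoly_le (c : ι → ℂ) (ν : ι → ℤ) (p : ℕ) (hι : 1 ≤ Fintype.card ι) :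
    ∀ q, (Npoly c ν p q).natDegree ≤ q * (Fintype.card ι - 1) := by
  intro q
  induction q with
  | zero => simp [Npoly]
  | succ q ih =>
    have hK : Fintype.card ι = (Fintype.card ι - 1) + 1 := (Nat.succ_pred_eq_of_pos hι).symm
    set K := Fintype.card ι - 1 with hKdef
    have h1 : (C (p : ℂ) * Lam c ν * Npoly c ν p q).natDegree ≤ (q + 1) * K := by
      refine le_trans Polynomial.natDegree_mul_le ?_
      refine le_trans (Nat.add_le_add (le_trans Polynomial.natDegree_mul_le
        (by simpa using natDegree_Lam_le c ν)) ih) ?_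
      ring_nf; omega
    have h2 : (C (q : ℂ) * (Phi c).derivative * Npoly c ν p q).natDegree ≤ (q + 1) * K := by
      refine le_trans Polynomial.natDegree_mul_le ?_
      refine le_trans (Nat.add_le_add (le_trans Polynomial.natDegree_mul_le
        (by simpa using natDegree_Phi_derivative_le c)) ih) ?_
      ring_nf; omega
    have h3 : (Phi c * (Npoly c ν p q).derivative).natDegree ≤ (q + 1) * K := by
      by_cases hz : (Npoly c ν p q).derivative = 0
      · simp [hz]
      · have hpos : 1 ≤ (Npoly c ν p q).natDegree := by
          by_contra h
          have h0 : (Npoly c ν p q).natDegree = 0 := by omega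
          obtain ⟨x, hx⟩ := Polynomial.natDegree_eq_zero.mp h0
          rw [← hx] at hz; simp at hz
        refine le_trans Polynomial.natDegree_mul_le ?_
        have := natDegree_Phi_le c
        have := Polynomial.natDegree_derivative_le (Npoly c ν p q)
        have hq : (Npoly c ν p q).natDegree ≤ q * K := ih
        have e1 : (q + 1) * K = q * K + K := by ring
        rw [e1]
        set a := q * K with ha
        omega
    calc (Npoly c ν p (q+1)).natDegree
        ≤ max ((C (p : ℂ) * Lam c ν * Npoly c ν p q
            - C (q : ℂ) * (Phi c).derivative * Npoly c ν p q).natDegree)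
            ((Phi c * (Npoly c ν p q).derivative).natDegree) := Polynomial.natDegree_add_le _ _
      _ ≤ (q + 1) * K := by
          refine max_le (le_trans (Polynomial.natDegree_sub_le _ _) (max_le h1 h2)) h3

lemma eval_Phi (c : ι → ℂ) (z : ℂ) : (Phi c).eval z = ∏ i, (z + c i) := by
  simp [Phi, eval_prod]

lemma eval_erase_prod (c : ι → ℂ) (i : ι) (z : ℂ) (hz : z + c i ≠ 0) :
    (∏ i' ∈ Finset.univ.erase i, (X + C (c i'))).eval z = (∏ j, (z + c j)) * (z + c i)⁻¹ := by
  have h := Finset.prod_erase_mul Finset.univ (fun j => z + c j) (Finset.mem_univ i)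
  rw [eval_prod]
  simp only [eval_add, eval_X, eval_C]
  rw [eq_comm, mul_inv_eq_iff_eq_mul₀ hz]
  simpa using h.symm

lemma eval_Lam (c : ι → ℂ) (ν : ι → ℤ) (z : ℂ) (hz : ∀ i, z + c i ≠ 0) :
    (Lam c ν).eval z = (∏ i, (z + c i)) * ∑ i, (ν i : ℂ) * (z + c i)⁻¹ := by
  rw [Lam, eval_finset_sum, Finset.mul_sum]
  refine Finset.sum_congr rfl fun i _ => ?_
  rw [eval_mul, eval_C, eval_erase_prod c i z (hz i)]
  ring

lemma eval_Phi_derivative (c : ι → ℂ) (z : ℂ) (hz : ∀ i, z + c i ≠ 0) :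
    (Phi c).derivative.eval z = (∏ i, (z + c i)) * ∑ i, (z + c i)⁻¹ := by
  rw [Phi, derivative_finset_prod, eval_finset_sum, Finset.mul_sum]
  refine Finset.sum_congr rfl fun i _ => ?_
  rw [eval_mul]
  simp only [derivative_add, derivative_X, derivative_C, add_zero, eval_one, mul_one]
  rw [eval_erase_prod c i z (hz i)]

lemma hasDerivAt_prod_zpow (c : ι → ℂ) (S : Finset ι) (e : ι → ℤ) (z : ℂ)
    (hz : ∀ i ∈ S, z + c i ≠ 0) :
    HasDerivAt (fun w => ∏ i ∈ S, (w + c i) ^ e i)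
      ((∏ i ∈ S, (z + c i) ^ e i) * ∑ i ∈ S, (e i : ℂ) * (z + c i)⁻¹) z := by
  classical
  induction S using Finset.induction_on with
  | empty => simpa using hasDerivAt_const z (1:ℂ)
  | @insert a s ha ih =>
    have hza : z + c a ≠ 0 := hz a (Finset.mem_insert_self a s)
    have hadd : HasDerivAt (fun w : ℂ => w + c a) 1 z := (hasDerivAt_id z).add_const (c a)
    have h1 : HasDerivAt (fun w : ℂ => (w + c a) ^ e a)
        (((e a : ℂ) * (z + c a) ^ (e a - 1)) * 1) z :=
      by have h := (hasDerivAt_zpow (e a) (z + c a) (Or.inl hza)).comp z hadd; exact h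
    have ihs := ih fun i hi => hz i (Finset.mem_insert_of_mem hi)
    have hmul : HasDerivAt (fun w => (w + c a) ^ e a * ∏ i ∈ s, (w + c i) ^ e i) _ z := h1.mul ihs
    have : (fun w => (w + c a) ^ e a * ∏ i ∈ s, (w + c i) ^ e i)
        = fun w => ∏ i ∈ insert a s, (w + c i) ^ e i := by
      funext w; rw [Finset.prod_insert ha]
    rw [this] at hmul
    convert hmul using 1
    rw [Finset.prod_insert ha, Finset.sum_insert ha, zpow_sub_one₀ hza]
    ring

lemma hasDerivAt_gfun (c : ι → ℂ) (ν : ι → ℤ) (p q : ℕ) (N : Polynomial ℂ) (z : ℂ)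
    (hz : ∀ i, z + c i ≠ 0) :
    HasDerivAt (fun w => (∏ i, (w + c i) ^ ((p:ℤ) * ν i - (q:ℤ))) * N.eval w)
      ((∏ i, (z + c i) ^ ((p:ℤ) * ν i - (q:ℤ) - 1)) *
        (C (p : ℂ) * Lam c ν * N - C (q : ℂ) * (Phi c).derivative * N
          + Phi c * N.derivative).eval z) z := by
  have h1 := hasDerivAt_prod_zpow c Finset.univ (fun i => (p:ℤ) * ν i - (q:ℤ)) z (fun i _ => hz i)
  have h2 : HasDerivAt (fun w => N.eval w) (N.derivative.eval z) z := N.hasDerivAt z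
  have h : HasDerivAt (fun w => (∏ i, (w + c i) ^ ((p:ℤ) * ν i - (q:ℤ))) * N.eval w) _ z :=
    h1.mul h2
  convert h using 1
  have hsplit : (∏ i, (z + c i) ^ ((p:ℤ) * ν i - (q:ℤ)))
      = (∏ i, (z + c i) ^ ((p:ℤ) * ν i - (q:ℤ) - 1)) * ∏ i, (z + c i) := by
    rw [← Finset.prod_mul_distrib]
    refine Finset.prod_congr rfl fun i _ => ?_
    rw [zpow_sub_one₀ (hz i)]
    exact (inv_mul_cancel_right₀ (hz i) _).symm
  simp only [eval_add, eval_sub, eval_mul, eval_C]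
  rw [eval_Lam c ν z hz, eval_Phi_derivative c z hz, eval_Phi, hsplit]
  have hsum : (∑ i, ((((p:ℤ) * ν i - (q:ℤ)) : ℤ) : ℂ) * (z + c i)⁻¹)
      = (p:ℂ) * (∑ i, (ν i : ℂ) * (z + c i)⁻¹) - (q:ℂ) * (∑ i, (z + c i)⁻¹) := by
    rw [Finset.mul_sum, Finset.mul_sum, ← Finset.sum_sub_distrib]
    refine Finset.sum_congr rfl fun i _ => ?_
    push_cast
    ring
  rw [hsum]
  ring

lemma iteratedDeriv_rational (c : ι → ℂ) (ν : ι → ℤ) (p : ℕ) (B : ℂ) (f : ℂ → ℂ)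
    (hf : ∀ z, (∀ i, z + c i ≠ 0) → f z = B * ∏ i, (z + c i) ^ ((p:ℤ) * ν i)) (q : ℕ) :
    ∀ z, (∀ i, z + c i ≠ 0) →
      iteratedDeriv q f z
        = B * (∏ i, (z + c i) ^ ((p:ℤ) * ν i - (q:ℤ))) * (Npoly c ν p q).eval z := by
  induction q with
  | zero => intro z hz; simpa [Npoly] using hf z hz
  | succ q ih =>
    intro z hz
    rw [iteratedDeriv_succ]
    have hU : IsOpen {z : ℂ | ∀ i, z + c i ≠ 0} := by
      have hset : {z : ℂ | ∀ i, z + c i ≠ 0} = ⋂ i, {z : ℂ | z + c i ≠ 0} := by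
        ext x; simp [Set.mem_iInter]
      rw [hset]
      exact isOpen_iInter_of_finite fun i =>
        (isOpen_compl_singleton).preimage (continuous_id.add continuous_const)
    have hev : iteratedDeriv q f =ᶠ[nhds z]
        (fun w => B * ((∏ i, (w + c i) ^ ((p:ℤ) * ν i - (q:ℤ))) * (Npoly c ν p q).eval w)) := by
      filter_upwards [hU.mem_nhds hz] with w hw
      rw [ih w hw]; ring
    rw [hev.deriv_eq]
    have h := (hasDerivAt_gfun c ν p q (Npoly c ν p q) z hz).const_mul B
    rw [h.deriv]
    have hexp : ∀ i, (p:ℤ) * ν i - ((q:ℕ)+1 : ℕ) = (p:ℤ) * ν i - (q:ℤ) - 1 := by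
      intro i; push_cast; ring
    simp only [Npoly, hexp]
    ring

lemma zpow_sum₀ {x : ℂ} (hx : x ≠ 0) {κ : Type*} (s : Finset κ) (f : κ → ℤ) :
    x ^ (∑ a ∈ s, f a) = ∏ a ∈ s, x ^ f a := by
  classical
  induction s using Finset.cons_induction with
  | empty => simp
  | cons a s ha ih => rw [Finset.sum_cons, Finset.prod_cons, zpow_add₀ hx, ih]

end Stmt5Aux

/-- The differential polynomial `Q[f] = f^{p₀} (f^{p₁})^{(q₁)} ⋯ (f^{p_k})^{(q_k)}`. -/
noncomputable def Qop (p₀ k : ℕ) (p q : Fin k → ℕ) (f : ℂ → ℂ) : ℂ → ℂ :=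
  fun z => f z ^ p₀ * ∏ i, iteratedDeriv (q i) (fun w => f w ^ p i) z

/-- For a rational function `R(z) = A Π (z+αᵢ)^{nᵢ} / Π (z+βᵢ)^{mᵢ}`, the differential
polynomial `Q[R]` has the form
`A' Π (z+αᵢ)^{(nᵢ+1)d-w} / Π (z+βᵢ)^{(mᵢ-1)d+w} · G(z)` with `G` a polynomial of
degree at most `(s+t-1)(w-d)`. -/
theorem stmt5 (s t : ℕ) (hs : 1 ≤ s) (ht : 1 ≤ t) (A : ℂ) (hA : A ≠ 0)
    (α : Fin s → ℂ) (β : Fin t → ℂ) (hα : Function.Injective α) (hβ : Function.Injective β)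
    (hαβ : ∀ i j, α i ≠ β j)
    (n : Fin s → ℕ) (m : Fin t → ℕ) (hn : ∀ i, 1 ≤ n i) (hm : ∀ i, 1 ≤ m i)
    (k p₀ : ℕ) (p q : Fin k → ℕ) (hpq : ∀ i, q i ≤ p i) (hq : 0 < ∑ i, q i)
    (d w : ℕ) (hd : d = p₀ + ∑ i, p i) (hw : w = d + ∑ i, q i) :
    ∃ (A' : ℂ) (G : Polynomial ℂ), G.natDegree ≤ (s + t - 1) * (w - d) ∧
      ∀ z : ℂ, (∀ i, z + α i ≠ 0) → (∀ i, z + β i ≠ 0) →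
        Qop p₀ k p q (fun w' => A * (∏ i, (w' + α i) ^ n i) / ∏ i, (w' + β i) ^ m i) z =
          A' * (∏ i, (z + α i) ^ (((n i : ℤ) + 1) * d - w)) /
            (∏ i, (z + β i) ^ (((m i : ℤ) - 1) * d + w)) * G.eval z := by
  classical
  set c : Fin s ⊕ Fin t → ℂ := Sum.elim α β with hc
  set ν : Fin s ⊕ Fin t → ℤ := Sum.elim (fun i => (n i : ℤ)) (fun j => -(m j : ℤ)) with hν
  have hcard : Fintype.card (Fin s ⊕ Fin t) = s + t := by simp
  refine ⟨A ^ d, ∏ a, Stmt5Aux.Npoly c ν (p a) (q a), ?_, ?_⟩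
  · refine le_trans (Polynomial.natDegree_prod_le _ _) ?_
    have h1 : ∀ a : Fin k, (Stmt5Aux.Npoly c ν (p a) (q a)).natDegree ≤ q a * (s + t - 1) := by
      intro a
      have := Stmt5Aux.natDegree_Npoly_le c ν (p a) (by rw [hcard]; omega) (q a)
      rwa [hcard] at this
    refine le_trans (Finset.sum_le_sum fun a _ => h1 a) ?_
    rw [← Finset.sum_mul]
    have hwd : w - d = ∑ a, q a := by omega
    rw [hwd, Nat.mul_comm]
  · intro z hzα hzβ
    have hz : ∀ i, z + c i ≠ 0 := by
      rintro (i | j)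
      · simpa [hc] using hzα i
      · simpa [hc] using hzβ j
    have key : ∀ (P : ℕ) (z' : ℂ), (∀ j, z' + β j ≠ 0) →
        (A * (∏ i, (z' + α i) ^ n i) / ∏ i, (z' + β i) ^ m i) ^ P
          = A ^ P * ∏ i, (z' + c i) ^ ((P:ℤ) * ν i) := by
      intro P z' hz'
      have hβ0 : (∏ i, (z' + β i) ^ m i) ≠ 0 :=
        Finset.prod_ne_zero_iff.mpr fun j _ => pow_ne_zero _ (hz' j)
      rw [Fintype.prod_sum_type]
      simp only [hc, hν, Sum.elim_inl, Sum.elim_inr]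
      have e1 : ∀ i : Fin s, (z' + α i) ^ ((P:ℤ) * (n i : ℤ)) = ((z' + α i) ^ n i) ^ P := by
        intro i
        rw [show (P:ℤ) * (n i : ℤ) = ((n i * P : ℕ) : ℤ) by push_cast; ring, zpow_natCast,
          pow_mul]
      have e2 : ∀ j : Fin t, (z' + β j) ^ ((P:ℤ) * (-(m j : ℤ))) = (((z' + β j) ^ m j) ^ P)⁻¹ := by
        intro j
        rw [show (P:ℤ) * (-(m j:ℤ)) = -((m j * P : ℕ) : ℤ) by push_cast; ring, zpow_neg,
          zpow_natCast, pow_mul]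
      simp only [e1, e2]
      rw [Finset.prod_pow, Finset.prod_inv_distrib, Finset.prod_pow, div_pow, mul_pow,
        div_eq_mul_inv, mul_assoc]
    have hfa : ∀ a : Fin k,
        iteratedDeriv (q a)
            (fun w' => (A * (∏ i, (w' + α i) ^ n i) / ∏ i, (w' + β i) ^ m i) ^ p a) z
          = A ^ p a * (∏ i, (z + c i) ^ ((p a : ℤ) * ν i - (q a : ℤ)))
              * (Stmt5Aux.Npoly c ν (p a) (q a)).eval z := by
      intro a
      refine Stmt5Aux.iteratedDeriv_rational c ν (p a) (A ^ p a) _ ?_ (q a) z hz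
      intro z' hz'
      exact key (p a) z' fun j => by simpa [hc] using hz' (Sum.inr j)
    simp only [Qop]
    rw [Finset.prod_congr rfl fun a _ => hfa a]
    rw [key p₀ z fun j => by simpa [hc] using hz (Sum.inr j)]
    rw [Finset.prod_mul_distrib, Finset.prod_mul_distrib, Finset.prod_pow_eq_pow_sum]
    rw [Finset.prod_comm]
    have hzp : ∀ i, (∏ a, (z + c i) ^ ((p a : ℤ) * ν i - (q a : ℤ)))
        = (z + c i) ^ (∑ a, ((p a : ℤ) * ν i - (q a : ℤ))) :=
      fun i => (Stmt5Aux.zpow_sum₀ (hz i) _ _).symm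
    rw [Finset.prod_congr rfl fun i _ => hzp i]
    have hEl : ∀ i : Fin s, (p₀:ℤ) * ν (Sum.inl i) + ∑ a, ((p a : ℤ) * ν (Sum.inl i) - (q a : ℤ))
        = ((n i : ℤ) + 1) * d - w := by
      intro i
      simp only [hν, Sum.elim_inl]
      rw [Finset.sum_sub_distrib, ← Finset.sum_mul, hw, hd]
      push_cast
      ring
    have hEr : ∀ j : Fin t, (p₀:ℤ) * ν (Sum.inr j) + ∑ a, ((p a : ℤ) * ν (Sum.inr j) - (q a : ℤ))
        = -(((m j : ℤ) - 1) * d + w) := by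
      intro j
      simp only [hν, Sum.elim_inr]
      rw [Finset.sum_sub_distrib, ← Finset.sum_mul, hw, hd]
      push_cast
      ring
    have hmerge : (∏ i, (z + c i) ^ ((p₀:ℤ) * ν i))
          * (∏ i, (z + c i) ^ (∑ a, ((p a : ℤ) * ν i - (q a : ℤ))))
        = (∏ i, (z + α i) ^ (((n i:ℤ)+1)*d - w))
          * (∏ j, (z + β j) ^ (((m j:ℤ)-1)*d + w))⁻¹ := by
      rw [← Finset.prod_mul_distrib]
      have : ∀ i, (z + c i) ^ ((p₀:ℤ) * ν i) * (z + c i) ^ (∑ a, ((p a : ℤ) * ν i - (q a : ℤ)))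
          = (z + c i) ^ ((p₀:ℤ) * ν i + ∑ a, ((p a : ℤ) * ν i - (q a : ℤ))) :=
        fun i => (zpow_add₀ (hz i) _ _).symm
      rw [Finset.prod_congr rfl fun i _ => this i, Fintype.prod_sum_type]
      rw [← Finset.prod_inv_distrib]
      congr 1
      · refine Finset.prod_congr rfl fun i _ => ?_
        rw [hEl i]
        simp [hc]
      · refine Finset.prod_congr rfl fun j _ => ?_
        rw [hEr j, zpow_neg]
        simp [hc]
    have hApow : (A:ℂ) ^ d = A ^ p₀ * A ^ (∑ a, p a) := by rw [hd, pow_add]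
    rw [Polynomial.eval_prod, hApow, div_eq_mul_inv]
    calc A ^ p₀ * (∏ i, (z + c i) ^ ((p₀:ℤ) * ν i))
          * (A ^ (∑ a, p a) * (∏ i, (z + c i) ^ (∑ a, ((p a : ℤ) * ν i - (q a : ℤ))))
            * ∏ a, (Stmt5Aux.Npoly c ν (p a) (q a)).eval z)
        = (A ^ p₀ * A ^ (∑ a, p a))
          * ((∏ i, (z + c i) ^ ((p₀:ℤ) * ν i))
            * (∏ i, (z + c i) ^ (∑ a, ((p a : ℤ) * ν i - (q a : ℤ)))))
          * ∏ a, (Stmt5Aux.Npoly c ν (p a) (q a)).eval z := by ring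
      _ = A ^ p₀ * A ^ (∑ a, p a) * ((∏ i, (z + α i) ^ (((n i:ℤ)+1)*d - w))
            * (∏ j, (z + β j) ^ (((m j:ℤ)-1)*d + w))⁻¹)
          * ∏ a, (Stmt5Aux.Npoly c ν (p a) (q a)).eval z := by rw [hmerge]
      _ = A ^ p₀ * A ^ (∑ a, p a) * (∏ i, (z + α i) ^ (((n i:ℤ)+1)*d - w))
            * (∏ j, (z + β j) ^ (((m j:ℤ)-1)*d + w))⁻¹
          * ∏ a, (Stmt5Aux.Npoly c ν (p a) (q a)).eval z := by ring
end

section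
/- Let R be a rational function of the form R(z) = A · Π_{i=1}^{s}(z + α_i)^{n_i} / Π_{i=1}^{t}(z + β_i)^{m_i} with N = Σ n_i, M = Σ m_i and M − N ≥ t, let h be a nonzero polynomial, and let Q[R] = R^{p_0}(R^{p_1})^{(q_1)} ⋯ (R^{p_k})^{(q_k)} be a differential polynomial of weight w (where p_i ≥ q_i and Σ q_i > 0). Then Q[R] − h has at least w distinct zeros in ℂ. -/
open Polynomial

noncomputable def Vrec (P G : ℂ[X]) (p : ℕ) : ℕ → ℂ[X]
  | 0 => P ^ p
  | (q+1) => derivative (Vrec P G p q) * G - C ((p + q : ℕ) : ℂ) * Vrec P G p q * derivative G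

lemma iteratedDeriv_ratpow (P G : ℂ[X]) (p : ℕ) (q : ℕ) :
    ∀ z : ℂ, G.eval z ≠ 0 →
    iteratedDeriv q (fun w => (P.eval w / G.eval w) ^ p) z
      = (Vrec P G p q).eval z / (G.eval z) ^ (p + q) := by
  induction q with
  | zero => intro z hz; simp [Vrec, div_pow]
  | succ q ih =>
    intro z hz
    rw [iteratedDeriv_succ]
    have hop : IsOpen {w : ℂ | G.eval w ≠ 0} := by
      have : Continuous fun w : ℂ => G.eval w := G.continuous_aeval
      exact isOpen_ne.preimage this
    have hev : (iteratedDeriv q (fun w => (P.eval w / G.eval w) ^ p))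
        =ᶠ[nhds z] (fun w => (Vrec P G p q).eval w / (G.eval w) ^ (p + q)) := by
      filter_upwards [hop.mem_nhds hz] with w hw using ih w hw
    rw [hev.deriv_eq]
    have h1 : HasDerivAt (fun w : ℂ => (Vrec P G p q).eval w)
        ((derivative (Vrec P G p q)).eval z) z := Polynomial.hasDerivAt _ z
    have h2 : HasDerivAt (fun w : ℂ => (G.eval w) ^ (p + q))
        ((derivative (G ^ (p+q))).eval z) z := by
      have := Polynomial.hasDerivAt (G ^ (p+q)) z
      simpa [eval_pow] using this
    have h3 := (h1.div h2 (pow_ne_zero _ hz)).deriv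
    rw [show (fun w => eval w (Vrec P G p q) / eval w G ^ (p + q)) = ((fun w => eval w (Vrec P G p q)) / fun w => eval w G ^ (p + q)) from rfl, h3]
    rw [derivative_pow]
    show _ = eval z (derivative (Vrec P G p q) * G - C ((p + q : ℕ) : ℂ) * Vrec P G p q * derivative G) / eval z G ^ (p + (q+1))
    rcases Nat.eq_zero_or_pos (p + q) with hpq | hpq
    · obtain ⟨hp0, hq0⟩ := Nat.add_eq_zero.mp hpq
      subst hp0; subst hq0
      simp
      rw [mul_div_assoc, div_self hz, mul_one]
    · obtain ⟨r, hr⟩ : ∃ r, p + q = r + 1 := ⟨p + q - 1, by omega⟩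
      rw [hr]
      simp only [eval_mul, eval_C, eval_pow, eval_sub, Nat.add_sub_cancel]
      have hGz : eval z G ≠ 0 := hz
      have : p + (q + 1) = r + 1 + 1 := by omega
      rw [this]
      field_simp
      ring

lemma S_mul_derivative (β : ℂ) (c : ℕ) (U : ℂ[X]) :
    (X + C β) * derivative ((X + C β) ^ c * U)
      = C (c : ℂ) * ((X + C β) ^ c * U) + (X + C β) ^ (c + 1) * derivative U := by
  rw [derivative_mul, derivative_pow]
  have hd : derivative (X + C β) = 1 := by simp
  rw [hd]
  cases c with
  | zero => simp [mul_comm]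
  | succ c =>
    simp only [Nat.add_sub_cancel]
    ring

lemma Vrec_factor (P G Gj : ℂ[X]) (β : ℂ) (m : ℕ) (p q : ℕ) (hm : 1 ≤ m) (hp : q ≠ 0 → 1 ≤ p)
    (hG : G = (X + C β) ^ m * Gj) (hGj : Gj.eval (-β) ≠ 0) (hP : P.eval (-β) ≠ 0) :
    ∃ U : ℂ[X], Vrec P G p q = (X + C β) ^ (q * (m - 1)) * U ∧ U.eval (-β) ≠ 0 := by
  induction q with
  | zero =>
    refine ⟨P ^ p, by simp [Vrec], ?_⟩
    simp only [eval_pow]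
    exact pow_ne_zero _ hP
  | succ q ih =>
    have hp1 : 1 ≤ p := hp (by omega)
    obtain ⟨U, hU, hUne⟩ := ih (fun hq => hp1)
    set S : ℂ[X] := X + C β with hS
    set c : ℕ := q * (m - 1) with hc
    set U' : ℂ[X] := (C (c : ℂ) * U + S * derivative U) * Gj
        - C ((p + q : ℕ) : ℂ) * U * (C ((m : ℕ) : ℂ) * Gj + S * derivative Gj) with hU'
    have hSG : S * derivative G = C ((m : ℕ) : ℂ) * (S ^ m * Gj) + S ^ (m + 1) * derivative Gj := by
      rw [hG]; exact S_mul_derivative β m Gj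
    have key : S * Vrec P G p (q + 1) = S ^ (c + m) * U' := by
      show S * (derivative (Vrec P G p q) * G - C ((p + q : ℕ) : ℂ) * Vrec P G p q * derivative G) = _
      rw [hU]
      have e1 : S * derivative (S ^ c * U) = C (c : ℂ) * (S ^ c * U) + S ^ (c + 1) * derivative U :=
        S_mul_derivative β c U
      calc S * (derivative (S ^ c * U) * G - C ((p + q : ℕ) : ℂ) * (S ^ c * U) * derivative G)
          = (S * derivative (S ^ c * U)) * G
            - C ((p + q : ℕ) : ℂ) * (S ^ c * U) * (S * derivative G) := by ring
        _ = (C (c : ℂ) * (S ^ c * U) + S ^ (c + 1) * derivative U) * (S ^ m * Gj)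
            - C ((p + q : ℕ) : ℂ) * (S ^ c * U)
              * (C ((m : ℕ) : ℂ) * (S ^ m * Gj) + S ^ (m + 1) * derivative Gj) := by
            rw [e1, hSG, hG]
        _ = S ^ (c + m) * U' := by
            rw [hU']
            rw [pow_add, pow_succ, pow_succ]
            ring
    have hcm : c + m = (q + 1) * (m - 1) + 1 := by
      obtain ⟨m', rfl⟩ : ∃ m', m = m' + 1 := ⟨m - 1, by omega⟩
      simp only [hc, Nat.add_sub_cancel]
      ring
    refine ⟨U', ?_, ?_⟩
    · have hSne : S ≠ 0 := by
        intro h0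
        have := congrArg (fun f : ℂ[X] => f.natDegree) h0
        simp [hS] at this
      apply mul_left_cancel₀ hSne
      rw [key, hcm, pow_succ]
      ring
    · rw [hU']
      have hSv : S.eval (-β) = 0 := by simp [hS]
      simp only [eval_sub, eval_mul, eval_add, eval_C, hSv, zero_mul, mul_zero, add_zero]
      have heq : (c : ℂ) * eval (-β) U * eval (-β) Gj
          - ((p + q : ℕ) : ℂ) * eval (-β) U * (((m : ℕ) : ℂ) * eval (-β) Gj)
          = eval (-β) U * eval (-β) Gj * ((c : ℂ) - ((p + q : ℕ) : ℂ) * ((m : ℕ) : ℂ)) := by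
        ring
      rw [heq]
      apply mul_ne_zero (mul_ne_zero hUne hGj)
      have hlt : c < (p + q) * m := by
        have h1 : c ≤ q * m := Nat.mul_le_mul_left _ (by omega)
        have h2 : q * m < (p + q) * m := by
          have hpm : 1 ≤ p * m := Nat.one_le_iff_ne_zero.mpr (by positivity)
          nlinarith
        omega
      intro h0
      have h0' := sub_eq_zero.mp h0
      have hcast : (c : ℂ) = (((p + q) * m : ℕ) : ℂ) := by push_cast; push_cast at h0'; linear_combination h0'
      have : c = (p + q) * m := Nat.cast_injective hcast
      omega

lemma Vrec_natDegree (P G : ℂ[X]) (p q nP : ℕ) (hP : P.natDegree ≤ nP) (hG : 1 ≤ G.natDegree) :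
    (Vrec P G p q).natDegree + q ≤ p * nP + q * G.natDegree := by
  induction q with
  | zero =>
    simpa [Vrec] using (natDegree_pow_le.trans (Nat.mul_le_mul_left p hP))
  | succ q ih =>
    have step : (Vrec P G p (q+1)).natDegree + 1
        ≤ (Vrec P G p q).natDegree + G.natDegree := by
      set V := Vrec P G p q with hV
      have h1 : (derivative V * G).natDegree + 1 ≤ V.natDegree + G.natDegree := by
        by_cases hdV : derivative V = 0
        · simp only [hdV, zero_mul, natDegree_zero]
          omega
        · have hVne : V.natDegree ≠ 0 := by
            intro h0
            exact hdV (by rw [eq_C_of_natDegree_eq_zero h0]; simp)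
          have ha := natDegree_mul_le (p := derivative V) (q := G)
          have hb := natDegree_derivative_le V
          omega
      have h2 : (C ((p + q : ℕ) : ℂ) * V * derivative G).natDegree + 1
          ≤ V.natDegree + G.natDegree := by
        have hb := natDegree_mul_le (p := C ((p + q : ℕ) : ℂ) * V) (q := derivative G)
        have hc := natDegree_mul_le (p := C ((p + q : ℕ) : ℂ)) (q := V)
        have hd := natDegree_derivative_le G
        have hC : (C ((p + q : ℕ) : ℂ)).natDegree = 0 := natDegree_C _
        omega
      have h3 := natDegree_sub_le (derivative V * G) (C ((p + q : ℕ) : ℂ) * V * derivative G)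
      show (derivative V * G - C ((p + q : ℕ) : ℂ) * V * derivative G).natDegree + 1 ≤ _
      omega
    have hmul : (q + 1) * G.natDegree = q * G.natDegree + G.natDegree := by ring
    linarith

lemma derivative_lc (B : ℂ[X]) (hB : B.natDegree ≠ 0) :
    (derivative B).natDegree = B.natDegree - 1 ∧
    (derivative B).leadingCoeff = (B.natDegree : ℂ) * B.leadingCoeff := by
  have hBne : B ≠ 0 := fun h0 => hB (by simp [h0])
  have h1 : 1 ≤ B.natDegree := Nat.one_le_iff_ne_zero.mpr hB
  have hcast : ((B.natDegree - 1 : ℕ) : ℂ) + 1 = (B.natDegree : ℂ) := by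
    have := Nat.sub_add_cancel h1
    exact_mod_cast congrArg (Nat.cast (R := ℂ)) this
  have hco : (derivative B).coeff (B.natDegree - 1) = (B.natDegree : ℂ) * B.leadingCoeff := by
    rw [coeff_derivative, Nat.sub_add_cancel h1, hcast, mul_comm]
    rfl
  have hne : (derivative B).coeff (B.natDegree - 1) ≠ 0 := by
    rw [hco]
    exact mul_ne_zero (Nat.cast_ne_zero.mpr hB) (leadingCoeff_ne_zero.mpr hBne)
  have hdeg : (derivative B).natDegree = B.natDegree - 1 :=
    le_antisymm (natDegree_derivative_le B) (le_natDegree_of_ne_zero hne)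
  exact ⟨hdeg, by rw [leadingCoeff, hdeg, hco]⟩

lemma pow_sub_one_dvd_derivative (S T1 : ℂ[X]) (ℓ : ℕ) (hdvd : S ^ ℓ ∣ T1)
    (hS : derivative S = 1) : S ^ (ℓ - 1) ∣ derivative T1 := by
  obtain ⟨B1, rfl⟩ := hdvd
  rw [derivative_mul, derivative_pow, hS]
  apply dvd_add
  · exact ⟨C (ℓ : ℂ) * B1, by ring⟩
  · exact Dvd.dvd.mul_right (pow_dvd_pow _ (Nat.sub_le ℓ 1)) _

/-- Lemma 2.2: for a rational function `R(z) = A Π(z+αᵢ)^{nᵢ} / Π(z+βᵢ)^{mᵢ}` with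
`M - N ≥ t` and a nonzero polynomial `h`, the function `Q[R] - h` has at least `w`
distinct zeros in `ℂ`, where `w` is the weight of `Q`. -/
theorem stmt7 (s t : ℕ) (hs : 1 ≤ s) (ht : 1 ≤ t) (A : ℂ) (hA : A ≠ 0)
    (α : Fin s → ℂ) (β : Fin t → ℂ) (hα : Function.Injective α) (hβ : Function.Injective β)
    (hαβ : ∀ i j, α i ≠ β j)
    (n : Fin s → ℕ) (m : Fin t → ℕ) (hn : ∀ i, 1 ≤ n i) (hm : ∀ i, 1 ≤ m i)
    (N M : ℕ) (hN : N = ∑ i, n i) (hM : M = ∑ i, m i) (hMN : N + t ≤ M)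
    (h : Polynomial ℂ) (hh : h ≠ 0)
    (k p₀ : ℕ) (p q : Fin k → ℕ) (hpq : ∀ i, q i ≤ p i) (hq : 0 < ∑ i, q i)
    (d w : ℕ) (hd : d = p₀ + ∑ i, p i) (hw : w = d + ∑ i, q i) :
    ∃ S : Finset ℂ, w ≤ S.card ∧ ∀ z ∈ S, (∀ i, z + β i ≠ 0) ∧
      Qop p₀ k p q (fun w' => A * (∏ i, (w' + α i) ^ n i) / ∏ i, (w' + β i) ^ m i) z =
        h.eval z := by
  classical
  set e : ℕ := ∑ i, q i with he
  have he1 : 1 ≤ e := hq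
  have hd1 : 1 ≤ d := by
    have : (∑ i, q i) ≤ ∑ i, p i := Finset.sum_le_sum (fun i _ => hpq i)
    omega
  have hw1 : 1 ≤ w := by omega
  have hSne : ∀ b : ℂ, (X + C b : ℂ[X]) ≠ 0 := by
    intro b h0
    have := congrArg natDegree h0
    simp at this
  set Pp : ℂ[X] := C A * ∏ i, (X + C (α i)) ^ n i with hPp
  set Gg : ℂ[X] := ∏ j, (X + C (β j)) ^ m j with hGg
  set Ff : ℂ[X] := Pp ^ p₀ * ∏ i, Vrec Pp Gg (p i) (q i) with hFf
  set Dd : ℂ[X] := ∏ j, (X + C (β j)) ^ (e * (m j - 1)) with hDd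
  set Gs : ℂ[X] := ∏ j, (X + C (β j)) ^ (d * m j + e) with hGsdef
  have hPeval : ∀ z : ℂ, Pp.eval z = A * ∏ i, (z + α i) ^ n i := by
    intro z; simp [hPp, eval_prod]
  have hGeval : ∀ z : ℂ, Gg.eval z = ∏ j, (z + β j) ^ m j := by
    intro z; simp [hGg, eval_prod]
  have hfR : (fun w' => A * (∏ i, (w' + α i) ^ n i) / ∏ i, (w' + β i) ^ m i)
      = fun z => Pp.eval z / Gg.eval z := by
    funext z
    rw [hPeval z, hGeval z]
  have hGgne : Gg ≠ 0 := by
    rw [hGg]; exact Finset.prod_ne_zero_iff.mpr (fun j _ => pow_ne_zero _ (hSne (β j)))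
  have hDdne : Dd ≠ 0 := by
    rw [hDd]; exact Finset.prod_ne_zero_iff.mpr (fun j _ => pow_ne_zero _ (hSne (β j)))
  have hGsne : Gs ≠ 0 := by
    rw [hGsdef]; exact Finset.prod_ne_zero_iff.mpr (fun j _ => pow_ne_zero _ (hSne (β j)))
  have hGgdeg : Gg.natDegree = M := by
    rw [hGg, natDegree_prod _ _ (fun j _ => pow_ne_zero _ (hSne (β j)))]
    simp only [natDegree_pow, natDegree_X_add_C, mul_one]
    exact hM.symm
  have hGg1 : 1 ≤ Gg.natDegree := by rw [hGgdeg]; omega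
  have hPpdeg : Pp.natDegree ≤ N := by
    calc Pp.natDegree ≤ (C A).natDegree + (∏ i, (X + C (α i)) ^ n i).natDegree :=
          natDegree_mul_le
      _ ≤ 0 + ∑ i, ((X + C (α i)) ^ n i).natDegree := by
          rw [natDegree_C]
          exact Nat.add_le_add_left (natDegree_prod_le _ _) 0
      _ ≤ N := by
          rw [zero_add, hN]
          apply Finset.sum_le_sum
          intro i _
          calc ((X + C (α i)) ^ n i).natDegree ≤ n i * (X + C (α i)).natDegree :=
                natDegree_pow_le
            _ = n i := by rw [natDegree_X_add_C, mul_one]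
  have hαβ' : ∀ (j : Fin t) (i : Fin s), (-(β j) + α i) ≠ 0 := by
    intro j i h0
    exact hαβ i j (by linear_combination h0)
  have hPne : ∀ j : Fin t, Pp.eval (-(β j)) ≠ 0 := by
    intro j
    rw [hPeval]
    exact mul_ne_zero hA (Finset.prod_ne_zero_iff.mpr (fun i _ => pow_ne_zero _ (hαβ' j i)))
  have hβne : ∀ (j j' : Fin t), j ≠ j' → (-(β j) + β j') ≠ 0 := by
    intro j j' hjj h0
    exact hjj (hβ (by linear_combination -h0))
  have hGfac : ∀ j : Fin t, ∃ Gj : ℂ[X],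
      Gg = (X + C (β j)) ^ m j * Gj ∧ Gj.eval (-(β j)) ≠ 0 := by
    intro j
    refine ⟨∏ j' ∈ Finset.univ.erase j, (X + C (β j')) ^ m j', ?_, ?_⟩
    · rw [hGg]
      exact (Finset.mul_prod_erase _ _ (Finset.mem_univ j)).symm
    · rw [eval_prod]
      apply Finset.prod_ne_zero_iff.mpr
      intro j' hj'
      simp only [eval_pow, eval_add, eval_X, eval_C]
      exact pow_ne_zero _ (hβne j j' (Ne.symm (Finset.mem_erase.mp hj').1))
  have hVfac : ∀ (i : Fin k) (j : Fin t), ∃ U : ℂ[X],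
      Vrec Pp Gg (p i) (q i) = (X + C (β j)) ^ (q i * (m j - 1)) * U ∧ U.eval (-(β j)) ≠ 0 := by
    intro i j
    obtain ⟨Gj, h1, h2⟩ := hGfac j
    exact Vrec_factor Pp Gg Gj (β j) (m j) (p i) (q i) (hm j)
      (fun hq0 => le_trans (Nat.one_le_iff_ne_zero.mpr hq0) (hpq i)) h1 h2 (hPne j)
  choose U hU hUne using hVfac
  have hFfac : ∀ j : Fin t, ∃ K : ℂ[X],
      Ff = (X + C (β j)) ^ (e * (m j - 1)) * K ∧ K.eval (-(β j)) ≠ 0 := by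
    intro j
    refine ⟨Pp ^ p₀ * ∏ i', U i' j, ?_, ?_⟩
    · rw [hFf, Finset.prod_congr rfl (fun i' _ => hU i' j), Finset.prod_mul_distrib,
        Finset.prod_pow_eq_pow_sum, ← Finset.sum_mul, ← he]
      ring
    · simp only [eval_mul, eval_pow, eval_prod]
      exact mul_ne_zero (pow_ne_zero _ (hPne j))
        (Finset.prod_ne_zero_iff.mpr (fun i' _ => hUne i' j))
  have hcopβ : ∀ (j j' : Fin t), j ≠ j' → IsCoprime (X + C (β j) : ℂ[X]) (X + C (β j')) := by
    intro j j' hjj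
    have hinj : Function.Injective (fun j : Fin t => -(β j)) :=
      fun a b hab => hβ (neg_injective hab)
    have := Polynomial.pairwise_coprime_X_sub_C hinj hjj
    simpa [Function.onFun, map_neg, sub_neg_eq_add] using this
  have hDdvd : Dd ∣ Ff := by
    rw [hDd]
    apply Finset.prod_dvd_of_coprime
    · intro j _ j' _ hjj
      simp only [Function.onFun]
      exact (hcopβ j j' hjj).pow
    · intro j _
      obtain ⟨K, hK, _⟩ := hFfac j
      exact ⟨K, hK⟩
  obtain ⟨Fs, hFsdef⟩ := hDdvd
  have hFsevalne : ∀ j : Fin t, Fs.eval (-(β j)) ≠ 0 := by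
    intro j
    obtain ⟨K, hK, hKne⟩ := hFfac j
    have hcancel : K = (∏ j' ∈ Finset.univ.erase j, (X + C (β j')) ^ (e * (m j' - 1))) * Fs := by
      apply mul_left_cancel₀ (pow_ne_zero (e * (m j - 1)) (hSne (β j)))
      rw [← hK, hFsdef, hDd, ← Finset.mul_prod_erase _ _ (Finset.mem_univ j)]
      ring
    intro h0
    apply hKne
    rw [hcancel, eval_mul, h0, mul_zero]
  have hFsne : Fs ≠ 0 := by
    intro h0
    exact hFsevalne ⟨0, ht⟩ (by rw [h0, eval_zero])
  have hGw : Gg ^ w = Dd * Gs := by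
    have hexp : ∀ j : Fin t, m j * w = e * (m j - 1) + (d * m j + e) := by
      intro j
      obtain ⟨m', hm'⟩ : ∃ m', m j = m' + 1 := ⟨m j - 1, by have := hm j; omega⟩
      rw [hm', hw, Nat.add_sub_cancel]
      ring
    rw [hGg, ← Finset.prod_pow, hDd, hGsdef, ← Finset.prod_mul_distrib]
    apply Finset.prod_congr rfl
    intro j _
    rw [← pow_mul, ← pow_add, hexp j]
  have hVdeg : ∀ i : Fin k, (Vrec Pp Gg (p i) (q i)).natDegree + q i ≤ p i * N + q i * M := by
    intro i
    have := Vrec_natDegree Pp Gg (p i) (q i) N hPpdeg hGg1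
    rwa [hGgdeg] at this
  have hFdeg : Ff.natDegree + e ≤ d * N + e * M := by
    have h1 : Ff.natDegree ≤ p₀ * N + ∑ i, (Vrec Pp Gg (p i) (q i)).natDegree := by
      rw [hFf]
      calc (Pp ^ p₀ * ∏ i, Vrec Pp Gg (p i) (q i)).natDegree
          ≤ (Pp ^ p₀).natDegree + (∏ i, Vrec Pp Gg (p i) (q i)).natDegree := natDegree_mul_le
        _ ≤ p₀ * N + ∑ i, (Vrec Pp Gg (p i) (q i)).natDegree :=
            Nat.add_le_add (natDegree_pow_le.trans (Nat.mul_le_mul_left _ hPpdeg))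
              (natDegree_prod_le _ _)
    have h2 : (∑ i, (Vrec Pp Gg (p i) (q i)).natDegree) + e ≤ (∑ i, p i) * N + e * M := by
      rw [he, Finset.sum_mul, Finset.sum_mul, ← Finset.sum_add_distrib, ← Finset.sum_add_distrib]
      exact Finset.sum_le_sum (fun i _ => hVdeg i)
    have h3 : d * N = p₀ * N + (∑ i, p i) * N := by rw [hd]; ring
    linarith
  have hDddeg : Dd.natDegree = e * (∑ j, (m j - 1)) := by
    rw [hDd, natDegree_prod _ _ (fun j _ => pow_ne_zero _ (hSne (β j)))]
    simp only [natDegree_pow, natDegree_X_add_C, mul_one]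
    rw [Finset.mul_sum]
  have hsumdGs : ∑ j, (d * m j + e) = d * M + e * t := by
    rw [Finset.sum_add_distrib, ← Finset.mul_sum, ← hM, Finset.sum_const, Finset.card_univ,
      Fintype.card_fin, smul_eq_mul, mul_comm t e]
  have hGsdeg : Gs.natDegree = d * M + e * t := by
    rw [hGsdef, natDegree_prod _ _ (fun j _ => pow_ne_zero _ (hSne (β j)))]
    simp only [natDegree_pow, natDegree_X_add_C, mul_one]
    exact hsumdGs
  have hMt : (∑ j, (m j - 1)) + t = M := by
    calc (∑ j, (m j - 1)) + t = ∑ j : Fin t, ((m j - 1) + 1) := by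
          rw [Finset.sum_add_distrib, Finset.sum_const, Finset.card_univ, Fintype.card_fin,
            smul_eq_mul, mul_one]
      _ = M := by
          rw [hM]
          exact Finset.sum_congr rfl (fun j _ => Nat.sub_add_cancel (hm j))
  have hFfN : Ff.natDegree = Dd.natDegree + Fs.natDegree := by
    rw [hFsdef]; exact natDegree_mul hDdne hFsne
  have hKEY : Fs.natDegree + w + t ≤ Gs.natDegree + 1 := by
    have hMM : e * M = e * (∑ j, (m j - 1)) + e * t := by rw [← hMt]; ring
    have hdM : d * N + d * t ≤ d * M := by
      calc d * N + d * t = d * (N + t) := by ring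
        _ ≤ d * M := Nat.mul_le_mul_left d hMN
    have hdt : d + t ≤ d * t + 1 := by
      obtain ⟨d', rfl⟩ : ∃ d', d = d' + 1 := ⟨d - 1, by omega⟩
      obtain ⟨t', rfl⟩ : ∃ t', t = t' + 1 := ⟨t - 1, by omega⟩
      have hexp : (d' + 1) * (t' + 1) = d' * t' + d' + t' + 1 := by ring
      have h0 : 0 ≤ d' * t' := Nat.zero_le _
      linarith
    have hwde : w = d + e := hw
    linarith [hFdeg, hFfN, hDddeg, hMM, hdM, hdt, hGsdeg]
  have hb1 : 1 ≤ Gs.natDegree := by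
    have h1 : 1 * 1 ≤ d * M := Nat.mul_le_mul hd1 (by omega)
    rw [hGsdeg]
    linarith
  set T : ℂ[X] := Fs - h * Gs with hT
  have hhGsdeg : (h * Gs).natDegree = h.natDegree + Gs.natDegree := natDegree_mul hh hGsne
  have hab : Fs.natDegree < (h * Gs).natDegree := by
    rw [hhGsdeg]; omega
  have hTdeg : T.natDegree = h.natDegree + Gs.natDegree := by
    rw [hT, natDegree_sub_eq_right_of_natDegree_lt hab, hhGsdeg]
  have hTne : T ≠ 0 := by
    intro h0
    have : T.natDegree = 0 := by rw [h0]; simp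
    omega
  have hGsevalβ : ∀ j : Fin t, Gs.eval (-(β j)) = 0 := by
    intro j
    rw [hGsdef, eval_prod]
    apply Finset.prod_eq_zero (Finset.mem_univ j)
    simp only [eval_pow, eval_add, eval_X, eval_C, neg_add_cancel]
    exact zero_pow (Nat.lt_of_lt_of_le he1 (Nat.le_add_left e _)).ne'
  have hTevalβ : ∀ j : Fin t, T.eval (-(β j)) ≠ 0 := by
    intro j
    rw [hT, eval_sub, eval_mul, hGsevalβ j, mul_zero, sub_zero]
    exact hFsevalne j
  have hQ : ∀ z : ℂ, Gg.eval z ≠ 0 →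
      Qop p₀ k p q (fun w' => A * (∏ i, (w' + α i) ^ n i) / ∏ i, (w' + β i) ^ m i) z
        = Ff.eval z / (Gg.eval z) ^ w := by
    intro z hz
    rw [hfR]
    simp only [Qop]
    rw [Finset.prod_congr rfl (fun i _ => iteratedDeriv_ratpow Pp Gg (p i) (q i) z hz)]
    rw [Finset.prod_div_distrib, Finset.prod_pow_eq_pow_sum, div_pow, div_mul_div_comm,
      ← pow_add]
    have hexp : p₀ + ∑ i, (p i + q i) = w := by
      rw [Finset.sum_add_distrib]; omega
    have hFev : eval z Ff = eval z Pp ^ p₀ * ∏ i, eval z (Vrec Pp Gg (p i) (q i)) := by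
      rw [hFf, eval_mul, eval_pow, eval_prod]
    rw [hexp, hFev]
  set Z : Finset ℂ := T.roots.toFinset with hZ
  have hmem : ∀ z ∈ Z, (∀ j, z + β j ≠ 0) ∧
      Qop p₀ k p q (fun w' => A * (∏ i, (w' + α i) ^ n i) / ∏ i, (w' + β i) ^ m i) z
        = h.eval z := by
    intro z hz
    have hzroot : T.eval z = 0 := (mem_roots hTne).mp (Multiset.mem_toFinset.mp hz)
    have hzβ : ∀ j : Fin t, z + β j ≠ 0 := by
      intro j h0
      have hzj : z = -(β j) := eq_neg_of_add_eq_zero_left h0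
      rw [hzj] at hzroot
      exact hTevalβ j hzroot
    refine ⟨hzβ, ?_⟩
    have hGz : Gg.eval z ≠ 0 := by
      rw [hGeval]
      exact Finset.prod_ne_zero_iff.mpr (fun j _ => pow_ne_zero _ (hzβ j))
    rw [hQ z hGz]
    have hGsz : Gs.eval z ≠ 0 := by
      rw [hGsdef, eval_prod]
      apply Finset.prod_ne_zero_iff.mpr
      intro j _
      simp only [eval_pow, eval_add, eval_X, eval_C]
      exact pow_ne_zero _ (hzβ j)
    have hDdz : Dd.eval z ≠ 0 := by
      rw [hDd, eval_prod]
      apply Finset.prod_ne_zero_iff.mpr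
      intro j _
      simp only [eval_pow, eval_add, eval_X, eval_C]
      exact pow_ne_zero _ (hzβ j)
    have hFsz : Fs.eval z = h.eval z * Gs.eval z := by
      have h1 := hzroot
      rw [hT, eval_sub, eval_mul, sub_eq_zero] at h1
      exact h1
    have hGwz : (Gg.eval z) ^ w = Dd.eval z * Gs.eval z := by
      have := congrArg (eval z) hGw
      rwa [eval_pow, eval_mul] at this
    rw [hGwz, hFsdef, eval_mul, hFsz]
    rw [div_eq_iff (mul_ne_zero hDdz hGsz)]
    ring
  have hcardZ : w ≤ Z.card := by
    have hcard : Multiset.card T.roots = h.natDegree + Gs.natDegree := by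
      rw [splits_iff_card_roots.mp (IsAlgClosed.splits T), hTdeg]
    set W : ℂ[X] := derivative Fs * T - Fs * derivative T with hW
    have hWeq2 : W = Fs * derivative (h * Gs) - derivative Fs * (h * Gs) := by
      rw [hW, hT, derivative_sub]
      ring
    have hWne : W ≠ 0 := by
      intro h0
      have hid : Fs * derivative (h * Gs) = derivative Fs * (h * Gs) := by
        have h1 : Fs * derivative (h * Gs) - derivative Fs * (h * Gs) = 0 := by
          rw [← hWeq2, h0]
        exact sub_eq_zero.mp h1
      have hBdeg : (h * Gs).natDegree ≠ 0 := by rw [hhGsdeg]; omega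
      by_cases ha0 : Fs.natDegree = 0
      · have hdFs : derivative Fs = 0 := by
          rw [eq_C_of_natDegree_eq_zero ha0]; simp
        rw [hdFs, zero_mul] at hid
        rcases mul_eq_zero.mp hid with h1 | h1
        · exact hFsne h1
        · exact hBdeg (natDegree_eq_zero_of_derivative_eq_zero h1)
      · obtain ⟨hdB, hlB⟩ := derivative_lc (h * Gs) hBdeg
        obtain ⟨hdF, hlF⟩ := derivative_lc Fs ha0
        have hlc := congrArg leadingCoeff hid
        rw [leadingCoeff_mul, leadingCoeff_mul, hlB, hlF] at hlc
        have hlcFs : Fs.leadingCoeff ≠ 0 := leadingCoeff_ne_zero.mpr hFsne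
        have hlcB : (h * Gs).leadingCoeff ≠ 0 :=
          leadingCoeff_ne_zero.mpr (mul_ne_zero hh hGsne)
        have h4 : ((((h * Gs).natDegree : ℂ)) - ((Fs.natDegree : ℂ)))
            * (Fs.leadingCoeff * (h * Gs).leadingCoeff) = 0 := by
          linear_combination hlc
        rcases mul_eq_zero.mp h4 with h5 | h5
        · have h6 : (((h * Gs).natDegree : ℂ)) = ((Fs.natDegree : ℂ)) := by
            linear_combination h5
          have h7 : (h * Gs).natDegree = Fs.natDegree := Nat.cast_injective h6
          omega
        · exact (mul_ne_zero hlcFs hlcB) h5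
    have hdvd1 : ∀ z ∈ Z, (X - C z) ^ (rootMultiplicity z T - 1) ∣ W := by
      intro z _
      have hdT : (X - C z) ^ (rootMultiplicity z T) ∣ T := pow_rootMultiplicity_dvd T z
      have h1 : (X - C z) ^ (rootMultiplicity z T - 1) ∣ T :=
        dvd_trans (pow_dvd_pow _ (Nat.sub_le _ 1)) hdT
      have h2 : (X - C z) ^ (rootMultiplicity z T - 1) ∣ derivative T :=
        pow_sub_one_dvd_derivative _ _ _ hdT (by simp)
      rw [hW]
      exact dvd_sub (h1.mul_left _) (h2.mul_left _)
    have hdvd2 : ∀ j : Fin t, (X + C (β j)) ^ (d * m j + e - 1) ∣ W := by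
      intro j
      have hGsj : (X + C (β j)) ^ (d * m j + e) ∣ h * Gs := by
        apply Dvd.dvd.mul_left _ h
        rw [hGsdef]
        exact Finset.dvd_prod_of_mem _ (Finset.mem_univ j)
      have h1 : (X + C (β j)) ^ (d * m j + e - 1) ∣ h * Gs :=
        dvd_trans (pow_dvd_pow _ (Nat.sub_le _ 1)) hGsj
      have h2 : (X + C (β j)) ^ (d * m j + e - 1) ∣ derivative (h * Gs) :=
        pow_sub_one_dvd_derivative _ _ _ hGsj (by simp)
      rw [hWeq2]
      exact dvd_sub (h2.mul_left _) (h1.mul_left _)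
    have hzneβ : ∀ z ∈ Z, ∀ j : Fin t, z ≠ -(β j) := by
      intro z hz j h0
      have hzr : T.eval z = 0 := (mem_roots hTne).mp (Multiset.mem_toFinset.mp hz)
      rw [h0] at hzr
      exact hTevalβ j hzr
    set W1 : ℂ[X] := ∏ z ∈ Z, (X - C z) ^ (rootMultiplicity z T - 1) with hW1
    set W2 : ℂ[X] := ∏ j, (X + C (β j)) ^ (d * m j + e - 1) with hW2
    have hW1dvd : W1 ∣ W := by
      rw [hW1]
      apply Finset.prod_dvd_of_coprime
      · intro z _ z' _ hzz
        simp only [Function.onFun]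
        exact (Polynomial.pairwise_coprime_X_sub_C (Function.injective_id (α := ℂ)) hzz).pow
      · exact hdvd1
    have hW2dvd : W2 ∣ W := by
      rw [hW2]
      apply Finset.prod_dvd_of_coprime
      · intro j _ j' _ hjj
        simp only [Function.onFun]
        exact (hcopβ j j' hjj).pow
      · intro j _
        exact hdvd2 j
    have hcop12 : IsCoprime W1 W2 := by
      rw [hW1, hW2]
      apply IsCoprime.prod_left
      intro z hz
      apply IsCoprime.prod_right
      intro j _
      apply IsCoprime.pow
      have hne : z ≠ -(β j) := hzneβ z hz j
      have := Polynomial.pairwise_coprime_X_sub_C (Function.injective_id (α := ℂ)) hne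
      simpa [Function.onFun, map_neg, sub_neg_eq_add] using this
    have hW1ne : W1 ≠ 0 := by
      rw [hW1]
      exact Finset.prod_ne_zero_iff.mpr (fun z _ => pow_ne_zero _ (X_sub_C_ne_zero z))
    have hW2ne : W2 ≠ 0 := by
      rw [hW2]
      exact Finset.prod_ne_zero_iff.mpr (fun j _ => pow_ne_zero _ (hSne (β j)))
    have hW1deg : W1.natDegree = ∑ z ∈ Z, (rootMultiplicity z T - 1) := by
      rw [hW1, natDegree_prod _ _ (fun z _ => pow_ne_zero _ (X_sub_C_ne_zero z))]
      simp only [natDegree_pow, natDegree_X_sub_C, mul_one]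
    have hW2deg : W2.natDegree = ∑ j, (d * m j + e - 1) := by
      rw [hW2, natDegree_prod _ _ (fun j _ => pow_ne_zero _ (hSne (β j)))]
      simp only [natDegree_pow, natDegree_X_add_C, mul_one]
    have hWdegle : W1.natDegree + W2.natDegree ≤ W.natDegree := by
      have := natDegree_le_of_dvd (hcop12.mul_dvd hW1dvd hW2dvd) hWne
      rwa [natDegree_mul hW1ne hW2ne] at this
    have hWub : W.natDegree + 1 ≤ Fs.natDegree + (h.natDegree + Gs.natDegree) := by
      have h1 : (derivative Fs * T).natDegree + 1
          ≤ Fs.natDegree + (h.natDegree + Gs.natDegree) := by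
        by_cases h0 : derivative Fs = 0
        · rw [h0, zero_mul, natDegree_zero]
          omega
        · have haa : Fs.natDegree ≠ 0 := by
            intro hcc
            exact h0 (by rw [eq_C_of_natDegree_eq_zero hcc]; simp)
          have hb := natDegree_mul_le (p := derivative Fs) (q := T)
          have hc := natDegree_derivative_le Fs
          omega
      have h2 : (Fs * derivative T).natDegree + 1
          ≤ Fs.natDegree + (h.natDegree + Gs.natDegree) := by
        have hb := natDegree_mul_le (p := Fs) (q := derivative T)
        have hc := natDegree_derivative_le T
        omega
      have h3 := natDegree_sub_le (derivative Fs * T) (Fs * derivative T)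
      rw [hW]
      omega
    have hsum1 : ∑ z ∈ Z, rootMultiplicity z T = h.natDegree + Gs.natDegree := by
      calc ∑ z ∈ Z, rootMultiplicity z T = ∑ z ∈ Z, T.roots.count z :=
            Finset.sum_congr rfl (fun z _ => (count_roots T).symm)
        _ = Multiset.card T.roots := by rw [hZ]; exact Multiset.toFinset_sum_count_eq T.roots
        _ = h.natDegree + Gs.natDegree := hcard
    have hmult1 : ∀ z ∈ Z, 1 ≤ rootMultiplicity z T := by
      intro z hz
      rw [← count_roots]
      exact Multiset.count_pos.mpr (Multiset.mem_toFinset.mp hz)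
    have hsum1' : (∑ z ∈ Z, (rootMultiplicity z T - 1)) + Z.card
        = h.natDegree + Gs.natDegree := by
      rw [← hsum1, Finset.card_eq_sum_ones, ← Finset.sum_add_distrib]
      exact Finset.sum_congr rfl (fun z hz => by have := hmult1 z hz; omega)
    have hsum2 : (∑ j, (d * m j + e - 1)) + t = Gs.natDegree := by
      calc (∑ j, (d * m j + e - 1)) + t = ∑ j : Fin t, ((d * m j + e - 1) + 1) := by
            rw [Finset.sum_add_distrib, Finset.sum_const, Finset.card_univ, Fintype.card_fin,
              smul_eq_mul, mul_one]
        _ = ∑ j, (d * m j + e) := Finset.sum_congr rfl (fun j _ => Nat.sub_add_cancel (le_trans he1 (Nat.le_add_left e _)))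
        _ = d * M + e * t := hsumdGs
        _ = Gs.natDegree := hGsdeg.symm
    rw [hW1deg, hW2deg] at hWdegle
    omega
  exact ⟨Z, hcardZ, hmem⟩
end

section
/- Let f be a non-constant non-vanishing rational function on ℂ all of whose poles have multiplicity at least 2, and let Q[f] = f^{p_0}(f^{p_1})^{(q_1)} ⋯ (f^{p_k})^{(q_k)} be a differential polynomial with p_i ≥ q_i for all i, Σ q_i > 0, and weight w. Then for every a ∈ ℂ, the function z ↦ Q[f](z) − 1/(z + a) has at least w distinct zeros in ℂ. -/
open Polynomial

lemma derivative_finset_prod {ι : Type*} [DecidableEq ι] (s : Finset ι) (f : ι → Polynomial ℂ) :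
    derivative (∏ i ∈ s, f i) = ∑ i ∈ s, (∏ j ∈ s.erase i, f j) * derivative (f i) := by
  classical
  induction s using Finset.induction_on with
  | empty => simp
  | insert _ _ ha ih =>
    rename_i a s'
    rw [Finset.prod_insert ha, derivative_mul, ih, Finset.sum_insert ha,
      Finset.erase_insert ha, Finset.mul_sum]
    congr 1
    · ring
    refine Finset.sum_congr rfl fun i hi => ?_
    rw [Finset.erase_insert_of_ne (by rintro rfl; exact ha hi),
      Finset.prod_insert (fun h => ha (Finset.mem_of_mem_erase h))]
    ring

noncomputable section DiffPolyAux
variable {t : ℕ} (β : Fin t → ℂ)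

/-- `B = ∏ (X + βⱼ)`. -/
def Bpoly : Polynomial ℂ := ∏ j, (X + C (β j))

/-- `A n = ∏ (X + βⱼ)^{n j}`. -/
def Apoly (n : Fin t → ℕ) : Polynomial ℂ := ∏ j, (X + C (β j)) ^ n j

/-- `D n = ∑ j, n j * ∏_{l ≠ j} (X + β l)`, so that `(A n)' * B = A n * D n`. -/
def Dpoly (n : Fin t → ℕ) : Polynomial ℂ :=
  ∑ j, (n j : Polynomial ℂ) * ∏ l ∈ Finset.univ.erase j, (X + C (β l))

/-- Numerator polynomials: `(c/A n)^{(q)} = c * Nrec n q / A (n + q)`. -/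
def Nrec (n : Fin t → ℕ) : ℕ → Polynomial ℂ
  | 0 => 1
  | q + 1 => derivative (Nrec n q) * Bpoly β - Nrec n q * Dpoly β (fun j => n j + q)

lemma eval_Apoly (n : Fin t → ℕ) (z : ℂ) :
    (Apoly β n).eval z = ∏ j, (z + β j) ^ n j := by
  simp [Apoly, eval_prod]

lemma eval_Bpoly (z : ℂ) : (Bpoly β).eval z = ∏ j, (z + β j) := by
  simp [Bpoly, eval_prod]

lemma monic_Apoly (n : Fin t → ℕ) : (Apoly β n).Monic :=
  monic_prod_of_monic _ _ fun j _ => (monic_X_add_C (β j)).pow (n j)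

lemma natDegree_Apoly (n : Fin t → ℕ) : (Apoly β n).natDegree = ∑ j, n j := by
  rw [Apoly, natDegree_prod]
  · simp [natDegree_pow]
  · intro j _
    exact pow_ne_zero _ (monic_X_add_C (β j)).ne_zero

lemma Apoly_add (n n' : Fin t → ℕ) :
    Apoly β (n + n') = Apoly β n * Apoly β n' := by
  rw [Apoly, Apoly, Apoly, ← Finset.prod_mul_distrib]
  exact Finset.prod_congr rfl fun j _ => by simp [pow_add]

lemma Apoly_one : Apoly β (fun _ => 1) = Bpoly β := by
  simp [Apoly, Bpoly]

lemma Apoly_sum {ι : Type*} (s : Finset ι) (g : ι → Fin t → ℕ) :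
    Apoly β (fun j => ∑ i ∈ s, g i j) = ∏ i ∈ s, Apoly β (g i) := by
  rw [Apoly]
  calc ∏ j, (X + C (β j)) ^ (∑ i ∈ s, g i j)
      = ∏ j, ∏ i ∈ s, (X + C (β j)) ^ g i j :=
        Finset.prod_congr rfl fun j _ => (Finset.prod_pow_eq_pow_sum s _ _).symm
    _ = ∏ i ∈ s, ∏ j, (X + C (β j)) ^ g i j := Finset.prod_comm
    _ = ∏ i ∈ s, Apoly β (g i) := rfl

/-- Key algebraic identity: `(A n)' * B = A n * D n`. -/
lemma deriv_Apoly_mul_B (n : Fin t → ℕ) :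
    derivative (Apoly β n) * Bpoly β = Apoly β n * Dpoly β n := by
  rw [Apoly, derivative_finset_prod, Dpoly, Finset.sum_mul, Finset.mul_sum]
  refine Finset.sum_congr rfl fun j _ => ?_
  rcases Nat.eq_zero_or_pos (n j) with h | h
  · simp [h]
  have hB : Bpoly β = (X + C (β j)) * ∏ l ∈ Finset.univ.erase j, (X + C (β l)) := by
    rw [Bpoly, ← Finset.prod_erase_mul _ _ (Finset.mem_univ j)]; ring
  have hA : (∏ l : Fin t, (X + C (β l)) ^ n l) = (X + C (β j)) ^ n j * ∏ l ∈ Finset.univ.erase j, (X + C (β l)) ^ n l := by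
    rw [← Finset.prod_erase_mul _ _ (Finset.mem_univ j)]; ring
  have hpow : (X + C (β j)) ^ (n j - 1) * (X + C (β j)) = (X + C (β j)) ^ n j := by
    rw [← pow_succ, Nat.sub_add_cancel h]
  rw [derivative_pow, hB, hA]
  simp only [derivative_add, derivative_X, derivative_C, add_zero, mul_one, C_eq_natCast]
  rw [← hpow]
  ring

lemma natDegree_Bpoly_le : (Bpoly β).natDegree ≤ t := by
  refine (natDegree_prod_le _ _).trans ?_
  refine (Finset.sum_le_card_nsmul _ _ 1 fun l _ => le_of_eq (natDegree_X_add_C (β l))).trans ?_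
  simp

lemma natDegree_Dpoly_le (n : Fin t → ℕ) : (Dpoly β n).natDegree ≤ t - 1 := by
  refine (natDegree_sum_le _ _).trans ?_
  simp only [Finset.fold_max_le]
  refine ⟨Nat.zero_le _, fun j _ => ?_⟩
  refine (natDegree_mul_le).trans ?_
  have h1 : ((n j : Polynomial ℂ)).natDegree = 0 := natDegree_natCast _
  have h2 : (∏ l ∈ Finset.univ.erase j, (X + C (β l))).natDegree ≤ t - 1 := by
    refine (natDegree_prod_le _ _).trans ?_
    refine (Finset.sum_le_card_nsmul _ _ 1 fun l _ => le_of_eq (natDegree_X_add_C (β l))).trans ?_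
    simp [Finset.card_erase_of_mem]
  omega

lemma natDegree_Nrec_le (n : Fin t → ℕ) (q : ℕ) :
    (Nrec β n q).natDegree ≤ q * (t - 1) := by
  induction q with
  | zero => simp [Nrec]
  | succ q ih =>
    rw [Nrec]
    refine (natDegree_sub_le _ _).trans ?_
    have hB : (Bpoly β).natDegree ≤ t := natDegree_Bpoly_le β
    have h2 : (Nrec β n q * Dpoly β (fun j => n j + q)).natDegree ≤ q * (t-1) + (t-1) :=
      (natDegree_mul_le).trans (add_le_add ih (natDegree_Dpoly_le β _))
    have h1 : (derivative (Nrec β n q) * Bpoly β).natDegree ≤ (q+1) * (t-1) := by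
      by_cases hz : derivative (Nrec β n q) = 0
      · simp [hz]
      · refine (natDegree_mul_le).trans ?_
        have hd : (derivative (Nrec β n q)).natDegree ≤ q * (t-1) - 1 :=
          (natDegree_derivative_le _).trans (by omega)
        have hN1 : 1 ≤ (Nrec β n q).natDegree := by
          by_contra h
          push_neg at h
          exact hz (derivative_of_natDegree_zero (by omega))
        have ht2 : 1 ≤ t - 1 := by
          by_contra hcon
          have h0 : t - 1 = 0 := by omega
          rw [h0, mul_zero] at ih
          omega
        have hmul : (q+1) * (t-1) = q * (t-1) + (t-1) := by ring
        have hqt : 1 ≤ q * (t-1) := hN1.trans ih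
        omega
    have : (q+1) * (t-1) = q * (t-1) + (t-1) := by ring
    exact max_le h1 (h2.trans (by omega))

lemma eval_Bpoly_at (j : Fin t) : (Bpoly β).eval (-β j) = 0 := by
  rw [Bpoly, eval_prod]
  exact Finset.prod_eq_zero (Finset.mem_univ j) (by simp)

lemma eval_erase_prod_at {i j : Fin t} (hij : i ≠ j) :
    (∏ l ∈ Finset.univ.erase i, (X + C (β l))).eval (-β j) = 0 := by
  rw [eval_prod]
  exact Finset.prod_eq_zero (Finset.mem_erase.2 ⟨hij.symm, Finset.mem_univ j⟩) (by simp)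

lemma eval_Dpoly_at (n : Fin t → ℕ) (j : Fin t) :
    (Dpoly β n).eval (-β j) = (n j : ℂ) * ∏ l ∈ Finset.univ.erase j, (β l - β j) := by
  rw [Dpoly, eval_finset_sum]
  rw [Finset.sum_eq_single j]
  · rw [eval_mul, eval_prod]
    congr 1
    · simp
    · exact Finset.prod_congr rfl fun l _ => by simp; ring
  · intro i _ hij
    rw [eval_mul, eval_erase_prod_at β hij, mul_zero]
  · simp

lemma eval_derivative_Bpoly_at (j : Fin t) :
    (derivative (Bpoly β)).eval (-β j) = ∏ l ∈ Finset.univ.erase j, (β l - β j) := by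
  rw [Bpoly, derivative_finset_prod, eval_finset_sum]
  rw [Finset.sum_eq_single j]
  · simp only [derivative_add, derivative_X, derivative_C, add_zero, eval_mul, eval_one, mul_one,
      eval_prod]
    exact Finset.prod_congr rfl fun l _ => by simp; ring
  · intro i _ hij
    simp only [derivative_add, derivative_X, derivative_C, add_zero, eval_mul, eval_one, mul_one]
    rw [eval_erase_prod_at β hij]
  · simp

lemma eval_derivative_Apoly_at (n : Fin t → ℕ) (hn : ∀ l, 2 ≤ n l) (j : Fin t) :
    (derivative (Apoly β n)).eval (-β j) = 0 := by
  rw [Apoly, derivative_finset_prod, eval_finset_sum]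
  refine Finset.sum_eq_zero fun i _ => ?_
  rw [eval_mul]
  by_cases hij : i = j
  · subst hij
    rw [derivative_pow]
    simp only [eval_mul, eval_pow, derivative_add, derivative_X, derivative_C, add_zero, eval_one,
      mul_one, eval_add, eval_X, eval_C]
    rw [neg_add_cancel, zero_pow (show n i - 1 ≠ 0 by have := hn i; omega)]
    ring
  · rw [eval_prod]
    rw [Finset.prod_eq_zero (Finset.mem_erase.2 ⟨fun h => hij h.symm, Finset.mem_univ j⟩)
      (by simp only [eval_pow, eval_add, eval_X, eval_C, neg_add_cancel];
          exact zero_pow (show n j ≠ 0 by have := hn j; omega))]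
    ring

lemma prod_sub_ne_zero (hβ : Function.Injective β) (j : Fin t) :
    (∏ l ∈ Finset.univ.erase j, (β l - β j)) ≠ 0 := by
  refine Finset.prod_ne_zero_iff.2 fun l hl => ?_
  have : l ≠ j := (Finset.mem_erase.1 hl).1
  exact sub_ne_zero.2 fun h => this (hβ h)

lemma eval_Nrec_ne_zero (hβ : Function.Injective β) (n : Fin t → ℕ) (hn : ∀ j, 1 ≤ n j)
    (q : ℕ) (j : Fin t) : (Nrec β n q).eval (-β j) ≠ 0 := by
  induction q with
  | zero => simp [Nrec]
  | succ q ih =>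
    rw [Nrec, eval_sub, eval_mul, eval_mul, eval_Bpoly_at, mul_zero, zero_sub, neg_ne_zero,
      eval_Dpoly_at]
    refine mul_ne_zero ih (mul_ne_zero ?_ (prod_sub_ne_zero β hβ j))
    exact_mod_cast Nat.cast_ne_zero.2 (show n j + q ≠ 0 by have := hn j; omega)

lemma isOpen_U : IsOpen {w : ℂ | ∀ j, w + β j ≠ 0} := by
  have : {w : ℂ | ∀ j, w + β j ≠ 0} = ⋂ j, (fun w => w + β j) ⁻¹' {0}ᶜ := by
    ext w; simp [Set.mem_iInter, add_eq_zero_iff_eq_neg]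
  rw [this]
  exact isOpen_iInter_of_finite fun j =>
    (isOpen_compl_singleton).preimage (continuous_id.add continuous_const)

lemma eval_Apoly_ne_zero (n : Fin t → ℕ) {z : ℂ} (hz : ∀ j, z + β j ≠ 0) :
    (Apoly β n).eval z ≠ 0 := by
  rw [eval_Apoly]
  exact Finset.prod_ne_zero_iff.2 fun j _ => pow_ne_zero _ (hz j)

lemma eval_Bpoly_ne_zero {z : ℂ} (hz : ∀ j, z + β j ≠ 0) : (Bpoly β).eval z ≠ 0 := by
  rw [eval_Bpoly]
  exact Finset.prod_ne_zero_iff.2 fun j _ => hz j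

lemma Apoly_succ (n : Fin t → ℕ) (q : ℕ) :
    Apoly β (fun j => n j + (q+1)) = Apoly β (fun j => n j + q) * Bpoly β := by
  rw [← Apoly_one β, ← Apoly_add]
  congr 1

/-- The analytic heart: the `q`-th derivative of `c' / A n` is `c' * Nrec n q / A (n+q)`
away from the poles. -/
lemma iteratedDeriv_c_div (c' : ℂ) (n : Fin t → ℕ) (q : ℕ) :
    ∀ z : ℂ, (∀ j, z + β j ≠ 0) →
    iteratedDeriv q (fun w => c' / (Apoly β n).eval w) z
      = c' * (Nrec β n q).eval z / (Apoly β (fun j => n j + q)).eval z := by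
  induction q with
  | zero =>
    intro z hz
    simp only [iteratedDeriv_zero, Nrec, eval_one, mul_one]
    congr 1
  | succ q ih =>
    intro z hz
    have hmem : {w : ℂ | ∀ j, w + β j ≠ 0} ∈ nhds z := (isOpen_U β).mem_nhds hz
    have heq : iteratedDeriv q (fun w => c' / (Apoly β n).eval w)
        =ᶠ[nhds z] fun w => c' * (Nrec β n q).eval w / (Apoly β (fun j => n j + q)).eval w :=
      Filter.eventuallyEq_of_mem hmem (fun w hw => ih w hw)
    rw [iteratedDeriv_succ, heq.deriv_eq]
    have hA : (Apoly β (fun j => n j + q)).eval z ≠ 0 := eval_Apoly_ne_zero β _ hz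
    have h1 : HasDerivAt (fun w => c' * (Nrec β n q).eval w)
        (c' * (derivative (Nrec β n q)).eval z) z := (Polynomial.hasDerivAt _ z).const_mul c'
    have h2 : HasDerivAt (fun w => (Apoly β (fun j => n j + q)).eval w)
        ((derivative (Apoly β (fun j => n j + q))).eval z) z := Polynomial.hasDerivAt _ z
    rw [show deriv (fun w => c' * (Nrec β n q).eval w / (Apoly β (fun j => n j + q)).eval w) z = _ from (h1.div h2 hA).deriv]
    have hkey : (derivative (Apoly β (fun j => n j + q))).eval z * (Bpoly β).eval z
        = (Apoly β (fun j => n j + q)).eval z * (Dpoly β (fun j => n j + q)).eval z := by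
      have := congrArg (eval z) (deriv_Apoly_mul_B β (fun j => n j + q))
      simpa using this
    rw [Apoly_succ, Nrec]
    have hB : (Bpoly β).eval z ≠ 0 := eval_Bpoly_ne_zero β hz
    simp only [eval_mul, eval_sub]
    field_simp
    linear_combination (-(1:ℂ) * c' * (Nrec β n q).eval z) * hkey

end DiffPolyAux

lemma sum_count_le_card (F : Finset ℂ) (M : Multiset ℂ) :
    ∑ z ∈ F, M.count z ≤ Multiset.card M := by
  classical
  have h1 : ∑ z ∈ F, M.count z = ∑ z ∈ F ∩ M.toFinset, M.count z := by
    refine (Finset.sum_subset Finset.inter_subset_left ?_).symm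
    intro x hx hnx
    have hx' : x ∉ M.toFinset := fun h => hnx (Finset.mem_inter.2 ⟨hx, h⟩)
    rw [Multiset.count_eq_zero]
    exact fun h => hx' (Multiset.mem_toFinset.2 h)
  rw [h1, ← Multiset.toFinset_sum_count_eq M]
  exact Finset.sum_le_sum_of_subset Finset.inter_subset_right

/-- Lemma 2.6: if `f = c / Π(z+βᵢ)^{mᵢ}` is a non-constant non-vanishing rational
function all of whose poles are multiple, then for every `a ∈ ℂ` the function
`Q[f](z) - 1/(z+a)` has at least `w` distinct zeros in `ℂ`. -/
theorem stmt8 (t : ℕ) (ht : 1 ≤ t) (c : ℂ) (hc : c ≠ 0)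
    (β : Fin t → ℂ) (hβ : Function.Injective β) (m : Fin t → ℕ) (hm : ∀ i, 2 ≤ m i)
    (k p₀ : ℕ) (p q : Fin k → ℕ) (hpq : ∀ i, q i ≤ p i) (hq : 0 < ∑ i, q i)
    (w : ℕ) (hw : w = p₀ + ∑ i, p i + ∑ i, q i) (a : ℂ) :
    ∃ S : Finset ℂ, w ≤ S.card ∧ ∀ z ∈ S, (∀ i, z + β i ≠ 0) ∧ z + a ≠ 0 ∧
      Qop p₀ k p q (fun w' => c / ∏ i, (w' + β i) ^ m i) z = 1 / (z + a) := by
  classical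
  set f : ℂ → ℂ := fun w' => c / ∏ i, (w' + β i) ^ m i with hf
  set sp := ∑ i, p i with hsp
  set sq := ∑ i, q i with hsq
  set P := p₀ + sp with hP
  have hsqsp : sq ≤ sp := Finset.sum_le_sum fun i _ => hpq i
  have hP1 : 1 ≤ P := by omega
  set nA : Fin t → ℕ := fun j => P * m j + sq with hnA
  set A : Polynomial ℂ := Apoly β nA with hA
  set N : Polynomial ℂ := ∏ i, Nrec β (fun j => p i * m j) (q i) with hN
  set γ : ℂ := c ^ P with hγ
  have hγ0 : γ ≠ 0 := pow_ne_zero _ hc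
  set G : Polynomial ℂ := C γ * ((X + C a) * N) - A with hG
  set D : Polynomial ℂ := Dpoly β nA with hD
  set ψ : Polynomial ℂ := N * Bpoly β + (X + C a) * (derivative N * Bpoly β - N * D) with hψ
  -- the rational-function form of Q[f]
  have hfp : ∀ pi : ℕ, (fun w => f w ^ pi)
      = fun w => c ^ pi / (Apoly β (fun j => pi * m j)).eval w := by
    intro pi; funext w
    rw [hf]
    simp only
    rw [div_pow, eval_Apoly]
    congr 1
    rw [← Finset.prod_pow]
    exact Finset.prod_congr rfl fun j _ => by rw [← pow_mul, mul_comm]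
  have hQf : ∀ z : ℂ, (∀ j, z + β j ≠ 0) →
      Qop p₀ k p q f z = γ * N.eval z / A.eval z := by
    intro z hz
    have hterm : ∀ i : Fin k, iteratedDeriv (q i) (fun w => f w ^ p i) z
        = c ^ p i * (Nrec β (fun j => p i * m j) (q i)).eval z
          / (Apoly β (fun j => p i * m j + q i)).eval z := by
      intro i
      rw [hfp (p i)]
      exact iteratedDeriv_c_div β _ _ _ z hz
    have h0 : f z ^ p₀ = c ^ p₀ / (Apoly β (fun j => p₀ * m j)).eval z := congrFun (hfp p₀) z
    simp only [Qop]
    rw [h0, Finset.prod_congr rfl fun i _ => hterm i, Finset.prod_div_distrib,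
      Finset.prod_mul_distrib, Finset.prod_pow_eq_pow_sum]
    have hdenprod : (∏ i : Fin k, (Apoly β (fun j => p i * m j + q i)).eval z)
        = (Apoly β (fun j => ∑ i : Fin k, (p i * m j + q i))).eval z := by
      rw [Apoly_sum, eval_prod]
    have hnum : (∏ i : Fin k, (Nrec β (fun j => p i * m j) (q i)).eval z) = N.eval z := by
      rw [hN, eval_prod]
    rw [hdenprod, hnum, div_mul_div_comm]
    have hden : (Apoly β (fun j => p₀ * m j)).eval z
        * (Apoly β (fun j => ∑ i : Fin k, (p i * m j + q i))).eval z = A.eval z := by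
      rw [← eval_mul, ← Apoly_add]
      have harg : ((fun j => p₀ * m j) + fun j => ∑ i : Fin k, (p i * m j + q i)) = nA := by
        funext j
        simp only [Pi.add_apply, hnA]
        rw [Finset.sum_add_distrib, ← Finset.sum_mul, ← hsp, ← hsq, hP]
        ring
      rw [harg, hA]
    rw [hden, ← mul_assoc, ← pow_add, hγ, hP]
  -- N does not vanish at the poles
  have hNe : ∀ j, N.eval (-β j) ≠ 0 := by
    intro j
    rw [hN, eval_prod]
    refine Finset.prod_ne_zero_iff.2 fun i _ => ?_
    by_cases hqi : q i = 0
    · rw [hqi]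
      simp [Nrec]
    · refine eval_Nrec_ne_zero β hβ _ (fun l => ?_) _ j
      have h1 : 1 ≤ p i := le_trans (by omega) (hpq i)
      have h2 := hm l
      exact Nat.one_le_iff_ne_zero.2 (Nat.mul_ne_zero (by omega) (by omega))
  have hdN : N.natDegree ≤ sq * (t - 1) := by
    rw [hN]
    refine (natDegree_prod_le _ _).trans ?_
    refine le_trans (Finset.sum_le_sum fun i _ => natDegree_Nrec_le β _ (q i)) ?_
    rw [← Finset.sum_mul]
  -- degrees
  set Sm := ∑ j, m j with hSm
  have hSm2 : 2 * t ≤ Sm := by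
    rw [hSm]
    calc 2 * t = ∑ _j : Fin t, 2 := by simp [Finset.sum_const, mul_comm]
    _ ≤ ∑ j, m j := Finset.sum_le_sum fun j _ => hm j
  have hAdeg : A.natDegree = P * Sm + t * sq := by
    rw [hA, natDegree_Apoly, hnA]
    rw [Finset.sum_add_distrib, ← Finset.mul_sum]
    simp [Finset.sum_const, mul_comm, hSm]
  have hAmonic : A.Monic := monic_Apoly β nA
  have huv : sq * (t - 1) + sq = t * sq := by
    obtain ⟨t', rfl⟩ : ∃ t', t = t' + 1 := ⟨t - 1, by omega⟩
    simp only [Nat.add_sub_cancel]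
    ring
  have hPSm : 2 * t ≤ P * Sm := le_trans hSm2 (Nat.le_mul_of_pos_left _ (by omega))
  have hlt : (C γ * ((X + C a) * N)).natDegree < A.natDegree := by
    have h1 : (C γ * ((X + C a) * N)).natDegree ≤ 1 + sq * (t-1) := by
      refine (natDegree_C_mul_le _ _).trans (natDegree_mul_le.trans ?_)
      exact add_le_add (le_of_eq (natDegree_X_add_C a)) hdN
    have h2 : 1 + sq * (t-1) < A.natDegree := by rw [hAdeg]; omega
    omega
  have hGdeg : G.natDegree = A.natDegree := by
    rw [hG]
    exact natDegree_sub_eq_right_of_natDegree_lt hlt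
  have hAdeg1 : 1 ≤ A.natDegree := by rw [hAdeg]; omega
  have hG0 : G ≠ 0 := by
    intro h
    rw [h, natDegree_zero] at hGdeg
    omega
  have hcard : Multiset.card G.roots = A.natDegree := by
    rw [← hGdeg]
    exact (splits_iff_card_roots.mp (IsAlgClosed.splits G))
  -- the auxiliary polynomial ψ controlling multiple roots
  have hψdeg : ψ.natDegree ≤ sq * (t - 1) + t := by
    rw [hψ]
    refine (natDegree_add_le _ _).trans (max_le ?_ ?_)
    · exact natDegree_mul_le.trans (add_le_add hdN (natDegree_Bpoly_le β))
    · refine natDegree_mul_le.trans ?_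
      have h2 : (derivative N * Bpoly β - N * D).natDegree ≤ sq * (t-1) + t - 1 := by
        refine (natDegree_sub_le _ _).trans (max_le ?_ ?_)
        · by_cases hz : derivative N = 0
          · simp [hz]
          · refine natDegree_mul_le.trans ?_
            have hd : (derivative N).natDegree ≤ N.natDegree - 1 := natDegree_derivative_le _
            have h1 : 1 ≤ N.natDegree := by
              by_contra hcon
              push_neg at hcon
              exact hz (derivative_of_natDegree_zero (by omega))
            have hB := natDegree_Bpoly_le β
            omega
        · refine natDegree_mul_le.trans ?_
          have hDd : D.natDegree ≤ t - 1 := natDegree_Dpoly_le β nA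
          omega
      have h1 : (X + C a).natDegree = 1 := natDegree_X_add_C a
      have : 1 ≤ sq * (t-1) + t := by omega
      omega
  set E : Fin t → ℂ := fun j => ∏ l ∈ Finset.univ.erase j, (β l - β j) with hE
  have hE0 : ∀ j, E j ≠ 0 := fun j => prod_sub_ne_zero β hβ j
  have hnA2 : ∀ l, 2 ≤ nA l := by
    intro l
    have := hm l
    have : 2 ≤ P * m l := le_trans this (Nat.le_mul_of_pos_left _ (by omega))
    simp only [hnA]
    omega
  have hψa : ∀ j0, a = β j0 → ψ.eval (-a) = 0 := by
    intro j0 haj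
    rw [hψ, haj]
    simp [eval_Bpoly_at β j0]
  have hψne : ψ ≠ 0 := by
    by_cases hcase : ∃ j0, a = β j0
    · obtain ⟨j0, haj⟩ := hcase
      have hde : (derivative ψ).eval (-a) = N.eval (-β j0) * E j0 * (1 - (nA j0 : ℂ)) := by
        rw [hψ, haj]
        simp only [derivative_add, derivative_mul, derivative_sub, derivative_X, derivative_C,
          zero_add, add_zero, one_mul, eval_add, eval_mul, eval_sub, eval_one, eval_X, eval_C,
          neg_add_cancel]
        rw [eval_Bpoly_at β j0, eval_derivative_Bpoly_at β j0, eval_Dpoly_at β nA j0]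
        simp only [hE]
        ring
      intro hzero
      rw [hzero] at hde
      simp only [map_zero, eval_zero] at hde
      have := mul_ne_zero (mul_ne_zero (hNe j0) (hE0 j0))
        (show (1 : ℂ) - (nA j0 : ℂ) ≠ 0 by
          have h2 := hnA2 j0
          intro hh
          have : (nA j0 : ℂ) = 1 := by linear_combination -hh
          have : nA j0 = 1 := by exact_mod_cast this
          omega)
      exact this hde.symm
    · push_neg at hcase
      set j0 : Fin t := ⟨0, ht⟩ with hj0
      have hev : ψ.eval (-β j0) = -((a - β j0) * (N.eval (-β j0) * ((nA j0 : ℂ) * E j0))) := by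
        rw [hψ]
        simp only [eval_add, eval_mul, eval_sub, eval_X, eval_C]
        rw [eval_Bpoly_at β j0, eval_Dpoly_at β nA j0]
        simp only [hE]
        ring
      intro hzero
      rw [hzero, eval_zero] at hev
      have hne : (a - β j0) * (N.eval (-β j0) * ((nA j0 : ℂ) * E j0)) ≠ 0 := by
        refine mul_ne_zero (sub_ne_zero.2 (hcase j0)) (mul_ne_zero (hNe j0) (mul_ne_zero ?_ (hE0 j0)))
        exact_mod_cast Nat.cast_ne_zero.2 (show nA j0 ≠ 0 by have := hnA2 j0; omega)
      exact hne (by linear_combination hev)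
  -- the key identity relating G, its derivative and ψ
  have hident : Bpoly β * (A * derivative G - derivative A * G) = C γ * A * ψ := by
    have hkey : derivative A * Bpoly β = A * D := by
      rw [hA, hD]
      exact deriv_Apoly_mul_B β nA
    rw [hG, hψ]
    simp only [derivative_sub, derivative_mul, derivative_C, derivative_X, derivative_X_add_C,
      zero_mul, zero_add, one_mul]
    linear_combination (-(C γ) * (X + C a) * N) * hkey
  -- evaluation of G
  have hGeval : ∀ z : ℂ, G.eval z = γ * ((z + a) * N.eval z) - A.eval z := by
    intro z
    rw [hG]
    simp
  have hAtβ : ∀ j, A.eval (-β j) = 0 := by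
    intro j
    rw [hA, eval_Apoly]
    refine Finset.prod_eq_zero (Finset.mem_univ j) ?_
    rw [neg_add_cancel]
    exact zero_pow (by have := hnA2 j; omega)
  set cond : ℂ → Prop := fun z => (∀ j, z + β j ≠ 0) ∧ z + a ≠ 0 with hcond
  set S : Finset ℂ := G.roots.toFinset.filter cond with hS
  refine ⟨S, ?_, ?_⟩
  · -- the cardinality bound
    -- every non-allowed root is -a
    have hbadsub : ∀ z ∈ G.roots.toFinset.filter (fun z => ¬ cond z), z = -a := by
      intro z hzz
      rw [Finset.mem_filter] at hzz
      obtain ⟨hzr, hnc⟩ := hzz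
      have hroot : G.IsRoot z := ((mem_roots hG0).1 (Multiset.mem_toFinset.1 hzr))
      by_cases hza : z + a = 0
      · exact eq_neg_of_add_eq_zero_left hza
      · exfalso
        have hnall : ¬ (∀ j, z + β j ≠ 0) := by
          intro hall
          exact hnc ⟨hall, hza⟩
        push_neg at hnall
        obtain ⟨j, hj⟩ := hnall
        have hzj : z = -β j := eq_neg_of_add_eq_zero_left hj
        have h0 : γ * ((z + a) * N.eval z) = 0 := by
          have h0' : γ * ((z + a) * N.eval z) - A.eval z = 0 := by
            rw [← hGeval z]; exact hroot
          rw [hzj, hAtβ j, sub_zero, ← hzj] at h0'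
          exact h0'
        have hNz : N.eval z ≠ 0 := by rw [hzj]; exact hNe j
        exact hza (by
          rcases mul_eq_zero.1 h0 with h | h
          · exact absurd h hγ0
          · rcases mul_eq_zero.1 h with h' | h'
            · exact h'
            · exact absurd h' hNz)
    have hbadle : ∑ z ∈ G.roots.toFinset.filter (fun z => ¬ cond z), G.roots.count z
        ≤ G.roots.count (-a) := by
      have hsub : G.roots.toFinset.filter (fun z => ¬ cond z) ⊆ {(-a)} := by
        intro z hz
        exact Finset.mem_singleton.2 (hbadsub z hz)
      calc ∑ z ∈ G.roots.toFinset.filter (fun z => ¬ cond z), G.roots.count z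
          ≤ ∑ z ∈ ({(-a)} : Finset ℂ), G.roots.count z :=
            Finset.sum_le_sum_of_subset hsub
        _ = G.roots.count (-a) := Finset.sum_singleton _ _
    -- multiplicity of -a as root of G is at most 1
    have hG'ne0 : derivative G ≠ 0 := by
      intro h
      have := natDegree_eq_zero_of_derivative_eq_zero h
      omega
    have hcnta : G.roots.count (-a) ≤ 1 := by
      rw [count_roots]
      by_cases hcase : ∃ j0, a = β j0
      · obtain ⟨j0, haj⟩ := hcase
        have hG'ne : (derivative G).eval (-a) ≠ 0 := by
          rw [hG]
          simp only [derivative_sub, derivative_mul, derivative_C, derivative_X_add_C,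
            zero_mul, zero_add, one_mul, eval_sub, eval_add, eval_mul, eval_C]
          rw [haj, eval_derivative_Apoly_at β nA hnA2 j0, sub_zero]
          simp only [eval_add, eval_mul, eval_X, eval_C, neg_add_cancel, zero_mul, add_zero]
          exact mul_ne_zero hγ0 (hNe j0)
        have hd0 : (derivative G).rootMultiplicity (-a) = 0 :=
          rootMultiplicity_eq_zero (fun hcon => hG'ne hcon)
        have hle := rootMultiplicity_sub_one_le_derivative_rootMultiplicity_of_ne_zero G (-a) hG'ne0
        omega
      · push_neg at hcase
        have hAa : A.eval (-a) ≠ 0 := by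
          rw [hA]
          refine eval_Apoly_ne_zero β nA (fun j => ?_)
          intro hj
          exact hcase j (by linear_combination -hj)
        have hnr : ¬ G.IsRoot (-a) := by
          intro hcon
          have h0' : γ * ((-a + a) * N.eval (-a)) - A.eval (-a) = 0 := by
            rw [← hGeval]; exact hcon
          rw [neg_add_cancel, zero_mul, mul_zero, zero_sub, neg_eq_zero] at h0'
          exact hAa h0'
        rw [rootMultiplicity_eq_zero hnr]
        omega
    -- excess multiplicities are controlled by ψ
    have hexc : ∀ z ∈ S, G.roots.count z ≤ ψ.roots.count z + 1 := by
      intro z hzS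
      rw [hS, Finset.mem_filter] at hzS
      obtain ⟨hzr, hz1, hz2⟩ := hzS
      have hBz : (Bpoly β).eval z ≠ 0 := eval_Bpoly_ne_zero β hz1
      have hAz : A.eval z ≠ 0 := by rw [hA]; exact eval_Apoly_ne_zero β nA hz1
      have hB0 : Bpoly β ≠ 0 := fun h => hBz (by rw [h, eval_zero])
      set H : Polynomial ℂ := A * derivative G - derivative A * G with hH
      have hH0 : H ≠ 0 := by
        intro h
        have h2 : C γ * A * ψ = 0 := by rw [← hident, h, mul_zero]
        rcases mul_eq_zero.1 h2 with h3 | h3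
        · rcases mul_eq_zero.1 h3 with h4 | h4
          · exact hγ0 (by simpa using congrArg (eval 0) h4)
          · exact hAmonic.ne_zero h4
        · exact hψne h3
      set μ := G.rootMultiplicity z with hμ
      have h1 : μ - 1 ≤ (derivative G).rootMultiplicity z :=
        rootMultiplicity_sub_one_le_derivative_rootMultiplicity_of_ne_zero G z hG'ne0
      have d1 : (X - C z) ^ (μ - 1) ∣ derivative G :=
        (pow_dvd_pow _ h1).trans (pow_rootMultiplicity_dvd _ z)
      have d2 : (X - C z) ^ (μ - 1) ∣ G :=
        (pow_dvd_pow _ (Nat.sub_le μ 1)).trans (pow_rootMultiplicity_dvd _ z)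
      have h2 : (X - C z) ^ (μ - 1) ∣ H :=
        dvd_sub (d1.mul_left A) (d2.mul_left (derivative A))
      have h3 : μ - 1 ≤ H.rootMultiplicity z := (le_rootMultiplicity_iff hH0).2 h2
      have h4 : H.rootMultiplicity z = ψ.rootMultiplicity z := by
        have hc := congrArg (rootMultiplicity z) hident
        rw [rootMultiplicity_mul (mul_ne_zero hB0 hH0)] at hc
        rw [rootMultiplicity_mul (mul_ne_zero (mul_ne_zero (C_ne_zero.2 hγ0) hAmonic.ne_zero) hψne)] at hc
        rw [rootMultiplicity_mul (mul_ne_zero (C_ne_zero.2 hγ0) hAmonic.ne_zero)] at hc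
        have hz0 : (Bpoly β).rootMultiplicity z = 0 := rootMultiplicity_eq_zero hBz
        have hz1' : (C γ).rootMultiplicity z = 0 :=
          rootMultiplicity_eq_zero (by simp [IsRoot, hγ0])
        have hz2' : A.rootMultiplicity z = 0 := rootMultiplicity_eq_zero hAz
        omega
      rw [count_roots, count_roots, ← hμ]
      omega
    -- assembling the count
    have hS1 : ∀ z ∈ S, 1 ≤ G.roots.count z := by
      intro z hzS
      rw [hS, Finset.mem_filter] at hzS
      exact Multiset.one_le_count_iff_mem.2 (Multiset.mem_toFinset.1 hzS.1)
    have hsplit : ∑ z ∈ S, G.roots.count z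
        + ∑ z ∈ G.roots.toFinset.filter (fun z => ¬ cond z), G.roots.count z
        = Multiset.card G.roots := by
      rw [hS, Finset.sum_filter_add_sum_filter_not, Multiset.toFinset_sum_count_eq]
    have hSsum : ∑ z ∈ S, G.roots.count z ≤ S.card + ∑ z ∈ S, ψ.roots.count z := by
      calc ∑ z ∈ S, G.roots.count z ≤ ∑ z ∈ S, (ψ.roots.count z + 1) :=
            Finset.sum_le_sum hexc
        _ = ∑ z ∈ S, ψ.roots.count z + S.card := by rw [Finset.sum_add_distrib, Finset.sum_const, smul_eq_mul, mul_one]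
        _ = S.card + ∑ z ∈ S, ψ.roots.count z := by omega
    have hψcard : Multiset.card ψ.roots ≤ sq * (t - 1) + t := (card_roots' ψ).trans hψdeg
    have hcount : A.natDegree ≤ S.card + (sq * (t - 1) + t) := by
      by_cases hcase : ∃ j0, a = β j0
      · obtain ⟨j0, haj⟩ := hcase
        have hna : -a ∉ S := by
          rw [hS, Finset.mem_filter]
          rintro ⟨-, -, hc2⟩
          exact hc2 (by ring)
        have hψroot : 1 ≤ ψ.roots.count (-a) :=
          Multiset.one_le_count_iff_mem.2 ((mem_roots hψne).2 (hψa j0 haj))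
        have hins : ∑ z ∈ S, ψ.roots.count z + 1 ≤ sq * (t - 1) + t := by
          calc ∑ z ∈ S, ψ.roots.count z + 1 ≤ ∑ z ∈ insert (-a) S, ψ.roots.count z := by
                rw [Finset.sum_insert hna]; omega
            _ ≤ Multiset.card ψ.roots := sum_count_le_card _ _
            _ ≤ sq * (t - 1) + t := hψcard
        omega
      · -- -a is not a root at all, so there are no bad roots
        push_neg at hcase
        have hAa : A.eval (-a) ≠ 0 := by
          rw [hA]
          refine eval_Apoly_ne_zero β nA (fun j => ?_)
          intro hj
          exact hcase j (by linear_combination -hj)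
        have hnr : ¬ G.IsRoot (-a) := by
          intro hcon
          have h0' : γ * ((-a + a) * N.eval (-a)) - A.eval (-a) = 0 := by
            rw [← hGeval]; exact hcon
          rw [neg_add_cancel, zero_mul, mul_zero, zero_sub, neg_eq_zero] at h0'
          exact hAa h0'
        have hbad0 : ∑ z ∈ G.roots.toFinset.filter (fun z => ¬ cond z), G.roots.count z = 0 := by
          refine Finset.sum_eq_zero fun z hz => ?_
          rw [hbadsub z hz, count_roots, rootMultiplicity_eq_zero hnr]
        have hψS : ∑ z ∈ S, ψ.roots.count z ≤ sq * (t - 1) + t :=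
          (sum_count_le_card S ψ.roots).trans hψcard
        omega
    -- final arithmetic
    have h1 : t ≤ t * P := Nat.le_mul_of_pos_right t (by omega)
    have h2 : P ≤ t * P := Nat.le_mul_of_pos_left P (by omega)
    have h3 : 2 * (t * P) ≤ P * Sm := by
      have hh := Nat.mul_le_mul_left P hSm2
      calc 2 * (t * P) = P * (2 * t) := by ring
        _ ≤ P * Sm := hh
    rw [hw]
    omega
  · -- membership conditions
    intro z hzS
    rw [hS, Finset.mem_filter] at hzS
    obtain ⟨hzr, hz1, hz2⟩ := hzS
    refine ⟨hz1, hz2, ?_⟩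
    have hroot : G.IsRoot z := (mem_roots hG0).1 (Multiset.mem_toFinset.1 hzr)
    have hAz : A.eval z ≠ 0 := by rw [hA]; exact eval_Apoly_ne_zero β nA hz1
    have heq : A.eval z = γ * ((z + a) * N.eval z) := by
      have := hroot
      rw [IsRoot, hGeval z, sub_eq_zero] at this
      exact this.symm
    have hNz : N.eval z ≠ 0 := by
      intro h
      rw [h, mul_zero, mul_zero] at heq
      exact hAz heq
    rw [hQf z hz1, heq]
    field_simp
end

section
/- Let f(z) = c/Π_{i=1}^{t}(z + β_i)^{m_i} be a non-vanishing rational function with c ≠ 0, distinct β_i, and each m_i ≥ 2. Then for the differential operator Q[f] = f^{p_0}(f^{p_1})^{(q_1)} ⋯ (f^{p_k})^{(q_k)} of degree d and weight w (p_i ≥ q_i, Σ q_i > 0), each β_i is a pole of Q[f] of order exactly (m_i − 1)d + w, and Q[f] vanishes at infinity to order at least M·d + (w − d) − t(w − d), where M = Σ m_i. -/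
open Filter
open Metric Set

lemma aux_deriv_analyticAt {G : ℂ → ℂ} {x : ℂ} (h : AnalyticAt ℂ G x) :
    AnalyticAt ℂ (deriv G) x :=
  ((ContinuousLinearMap.apply ℂ ℂ (1:ℂ)).analyticAt _).comp h.fderiv

lemma aux_deriv_evEq {f g : ℂ → ℂ} {x : ℂ}
    (h : f =ᶠ[nhdsWithin x {x}ᶜ] g) : deriv f =ᶠ[nhdsWithin x {x}ᶜ] deriv g := by
  obtain ⟨U, hUo, hxU, hU⟩ := mem_nhdsWithin.mp h
  have hW : (U \ {x}) ∈ nhdsWithin x {x}ᶜ :=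
    mem_nhdsWithin.mpr ⟨U, hUo, hxU, fun z hz => ⟨hz.1, hz.2⟩⟩
  filter_upwards [hW] with z hz
  apply Filter.EventuallyEq.deriv_eq
  have hmem : U \ {x} ∈ nhds z := (hUo.sdiff isClosed_singleton).mem_nhds hz
  filter_upwards [hmem] with y hy
  exact hU ⟨hy.1, hy.2⟩

lemma aux_pole_iter (x : ℂ) (N : ℕ) (hN : 1 ≤ N) {g : ℂ → ℂ}
    (hg : AnalyticAt ℂ g x) (hgx : g x ≠ 0) {h : ℂ → ℂ}
    (hh : h =ᶠ[nhdsWithin x {x}ᶜ] fun z => (z - x) ^ (-(N:ℤ)) * g z) (q : ℕ) :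
    ∃ G : ℂ → ℂ, AnalyticAt ℂ G x ∧ G x ≠ 0 ∧
      iteratedDeriv q h =ᶠ[nhdsWithin x {x}ᶜ]
        fun z => (z - x) ^ (-((N + q : ℕ) : ℤ)) * G z := by
  induction q with
  | zero => exact ⟨g, hg, hgx, by simpa [iteratedDeriv_zero] using hh⟩
  | succ q ih =>
    obtain ⟨G, hG, hGx, hGe⟩ := ih
    refine ⟨fun z => (z - x) * deriv G z - ((N + q : ℕ) : ℂ) * G z, ?_, ?_, ?_⟩
    · exact ((analyticAt_id.sub analyticAt_const).mul (aux_deriv_analyticAt hG)).sub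
        (analyticAt_const.mul hG)
    · simp only [sub_self, zero_mul, zero_sub, neg_ne_zero]
      exact mul_ne_zero (Nat.cast_ne_zero.mpr (by omega)) hGx
    · rw [iteratedDeriv_succ]
      have h1 := aux_deriv_evEq hGe
      have h2 : (deriv fun z => (z - x) ^ (-((N + q : ℕ) : ℤ)) * G z) =ᶠ[nhdsWithin x {x}ᶜ]
          fun z => (z - x) ^ (-((N + (q+1) : ℕ) : ℤ)) *
            ((z - x) * deriv G z - ((N + q : ℕ) : ℂ) * G z) := by
        have hGa : ∀ᶠ z in nhdsWithin x {x}ᶜ, AnalyticAt ℂ G z :=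
          hG.eventually_analyticAt.filter_mono nhdsWithin_le_nhds
        filter_upwards [hGa, self_mem_nhdsWithin] with z hGz (hz : z ≠ x)
        have hzx : z - x ≠ 0 := sub_ne_zero.mpr hz
        have d1 : HasDerivAt (fun w : ℂ => (w - x) ^ (-((N + q : ℕ) : ℤ)))
            ((-((N + q : ℕ) : ℤ)) * (z - x) ^ ((-((N + q : ℕ) : ℤ)) - 1)) z := by
          have := (hasDerivAt_zpow (-((N + q : ℕ) : ℤ)) (z - x) (Or.inl hzx)).comp z
            ((hasDerivAt_id z).sub_const x)
          simpa [Function.comp_def] using this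
        have d2 : HasDerivAt G (deriv G z) z := hGz.differentiableAt.hasDerivAt
        have d3 : HasDerivAt (fun w => (w - x) ^ (-((N + q : ℕ) : ℤ)) * G w) _ z := d1.mul d2
        rw [d3.deriv]
        have e1 : (z - x) ^ ((-((N + q : ℕ) : ℤ)) - 1) = (z - x) ^ (-((N + (q+1) : ℕ) : ℤ)) := by
          congr 1; push_cast; ring
        have e2 : (z - x) ^ (-((N + q : ℕ) : ℤ)) =
            (z - x) ^ (-((N + (q+1) : ℕ) : ℤ)) * (z - x) := by
          rw [← zpow_add_one₀ hzx]; congr 1; push_cast; ring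
        rw [e1, e2]; push_cast; ring
      exact h1.trans h2

lemma aux_an_iter {U : Set ℂ} {g : ℂ → ℂ} (hg : AnalyticOnNhd ℂ g U) (q : ℕ) :
    AnalyticOnNhd ℂ (iteratedDeriv q g) U := by
  induction q with
  | zero => simpa [iteratedDeriv_zero] using hg
  | succ q ih => rw [iteratedDeriv_succ]; exact ih.deriv

lemma aux_decay (B R1 : ℝ) (hBR : B < R1) (h0 : 0 < R1) {g : ℂ → ℂ}
    (hg : AnalyticOnNhd ℂ g {z : ℂ | B < ‖z‖}) (n : ℕ) (K : ℝ) (hK : 0 ≤ K)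
    (hbound : ∀ z : ℂ, R1 ≤ ‖z‖ → ‖g z‖ ≤ K / ‖z‖ ^ n) (Q : ℕ) :
    ∃ K' : ℝ, 0 ≤ K' ∧ ∀ z : ℂ, 2 ^ Q * R1 ≤ ‖z‖ →
      ‖iteratedDeriv Q g z‖ ≤ K' / ‖z‖ ^ (n + Q) := by
  induction Q with
  | zero =>
    exact ⟨K, hK, fun z hz => by
      simpa [iteratedDeriv_zero] using hbound z (by simpa using hz)⟩
  | succ Q ih =>
    obtain ⟨K', hK', hB'⟩ := ih
    refine ⟨2 ^ (n + Q + 1) * K', by positivity, fun z hz => ?_⟩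
    have h2Q : (1:ℝ) ≤ 2 ^ Q := one_le_pow₀ (by norm_num)
    have hz1 : 2 * (2 ^ Q * R1) ≤ ‖z‖ := by
      rw [← mul_assoc, mul_comm (2:ℝ) (2^Q), ← pow_succ]; exact hz
    have hQR : R1 ≤ 2 ^ Q * R1 := le_mul_of_one_le_left h0.le h2Q
    have hznorm : (0:ℝ) < ‖z‖ := by nlinarith
    have hr : (0:ℝ) < ‖z‖ / 2 := by linarith
    have hhalf : 2 ^ Q * R1 ≤ ‖z‖ / 2 := by linarith
    have hsub : closedBall z (‖z‖ / 2) ⊆ {w : ℂ | B < ‖w‖} := by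
      intro w hw
      rw [mem_closedBall, dist_eq_norm] at hw
      have h1 : ‖z‖ - ‖w‖ ≤ ‖z‖ / 2 :=
        le_trans (norm_sub_norm_le z w) (by rwa [norm_sub_rev])
      have : ‖z‖ / 2 ≤ ‖w‖ := by linarith
      exact lt_of_lt_of_le hBR (by linarith)
    have hwlow : ∀ w ∈ sphere z (‖z‖ / 2), ‖z‖ / 2 ≤ ‖w‖ := by
      intro w hw
      rw [mem_sphere, dist_eq_norm] at hw
      have h1 : ‖z‖ - ‖w‖ ≤ ‖z‖ / 2 :=
        le_trans (norm_sub_norm_le z w) (le_of_eq (by rwa [norm_sub_rev]))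
      linarith
    have hdiff : DiffContOnCl ℂ (iteratedDeriv Q g) (ball z (‖z‖ / 2)) := by
      apply DifferentiableOn.diffContOnCl
      rw [closure_ball z (ne_of_gt hr)]
      exact fun w hw => ((aux_an_iter hg Q) w (hsub hw)).differentiableAt.differentiableWithinAt
    have hC : ∀ w ∈ sphere z (‖z‖ / 2), ‖iteratedDeriv Q g w‖ ≤ K' / (‖z‖ / 2) ^ (n + Q) := by
      intro w hw
      have hwl := hwlow w hw
      refine le_trans (hB' w (le_trans hhalf hwl)) ?_
      apply div_le_div_of_nonneg_left hK' (by positivity)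
      exact pow_le_pow_left₀ hr.le hwl _
    have key := Complex.norm_deriv_le_of_forall_mem_sphere_norm_le hr hdiff hC
    rw [iteratedDeriv_succ]
    refine le_trans key (le_of_eq ?_)
    rw [div_div, ← pow_succ]
    rw [div_pow, div_div_eq_mul_div, mul_comm K' _, mul_div_assoc, mul_div_assoc]
    ring_nf

/-- For the non-vanishing rational function `f = c / Π (z+βᵢ)^{mᵢ}` with all `mᵢ ≥ 2`,
each `-βᵢ` is a pole of `Q[f]` of order exactly `(mᵢ-1)d + w`, and `Q[f]` vanishes at
infinity to order at least `M·d + (w-d) - t(w-d)`. -/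
theorem stmt14 (t : ℕ) (ht : 1 ≤ t) (c : ℂ) (hc : c ≠ 0) (β : Fin t → ℂ)
    (hβ : Function.Injective β) (m : Fin t → ℕ) (hm : ∀ i, 2 ≤ m i)
    (k p₀ : ℕ) (p q : Fin k → ℕ) (hpq : ∀ i, q i ≤ p i) (hq : 0 < ∑ i, q i)
    (d w M : ℕ) (hd : d = p₀ + ∑ i, p i) (hw : w = d + ∑ i, q i) (hM : M = ∑ i, m i) :
    (∀ i : Fin t,
      ∃ h : MeromorphicAt (Qop p₀ k p q (fun z => c / ∏ j, (z + β j) ^ m j)) (-(β i)),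
        meromorphicOrderAt (Qop p₀ k p q (fun z => c / ∏ j, (z + β j) ^ m j)) (-(β i)) =
          -((((m i : ℤ) - 1) * d + w) : ℤ)) ∧
    ∃ C : ℝ, ∀ᶠ z : ℂ in Bornology.cobounded ℂ,
      ‖Qop p₀ k p q (fun z' => c / ∏ j, (z' + β j) ^ m j) z‖ ≤
        C / ‖z‖ ^ ((M : ℤ) * d + ((w : ℤ) - d) - t * ((w : ℤ) - d)) := by
  set f : ℂ → ℂ := fun z => c / ∏ j, (z + β j) ^ m j with hf
  constructor
  · -- Part 1: pole orders
    intro i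
    set x : ℂ := -(β i) with hx
    set gi : ℂ → ℂ := fun z => c / ∏ j ∈ Finset.univ.erase i, (z + β j) ^ m j with hgi
    have hDan : AnalyticAt ℂ (fun z => ∏ j ∈ Finset.univ.erase i, (z + β j) ^ m j) x :=
      Finset.analyticAt_fun_prod _ (fun j _ => (analyticAt_id.add analyticAt_const).pow _)
    have hDx : (∏ j ∈ Finset.univ.erase i, (x + β j) ^ m j) ≠ 0 := by
      rw [Finset.prod_ne_zero_iff]
      intro j hj
      apply pow_ne_zero
      have hji : j ≠ i := (Finset.mem_erase.mp hj).1
      rw [hx, neg_add_eq_sub, sub_ne_zero]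
      exact fun hcon => hji (hβ hcon)
    have hgia : AnalyticAt ℂ gi x := analyticAt_const.div hDan hDx
    have hgix : gi x ≠ 0 := div_ne_zero hc hDx
    have hbase : ∀ z : ℂ, f z = (z - x) ^ (-(m i : ℤ)) * gi z := by
      intro z
      rw [hf]
      simp only []
      rw [← Finset.mul_prod_erase Finset.univ _ (Finset.mem_univ i)]
      rw [mul_comm ((z + β i) ^ m i), ← div_div, div_eq_inv_mul]
      congr 1
      rw [zpow_neg, zpow_natCast, hx, sub_neg_eq_add]
    have hpow : ∀ (pp : ℕ) (z : ℂ), z ≠ x →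
        f z ^ pp = (z - x) ^ (-((m i * pp : ℕ) : ℤ)) * gi z ^ pp := by
      intro pp z hz
      have hzx : z - x ≠ 0 := sub_ne_zero.mpr hz
      rw [hbase z, mul_pow, ← zpow_natCast ((z - x) ^ (-(m i : ℤ))) pp, ← zpow_mul]
      congr 2
      push_cast; ring
    -- representation of each factor
    have hfac : ∀ j : Fin k, ∃ G : ℂ → ℂ, AnalyticAt ℂ G x ∧ G x ≠ 0 ∧
        iteratedDeriv (q j) (fun w => f w ^ p j) =ᶠ[nhdsWithin x {x}ᶜ]
          fun z => (z - x) ^ (-((m i * p j + q j : ℕ) : ℤ)) * G z := by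
      intro j
      rcases Nat.eq_zero_or_pos (p j) with hpj | hpj
      · have hqj : q j = 0 := le_antisymm (hpj ▸ hpq j) (Nat.zero_le _)
        refine ⟨fun _ => 1, analyticAt_const, one_ne_zero, ?_⟩
        apply Filter.Eventually.of_forall
        intro z
        simp [hpj, hqj, iteratedDeriv_zero]
      · have hN : 1 ≤ m i * p j := Nat.one_le_iff_ne_zero.mpr
          (Nat.mul_ne_zero (by have := hm i; omega) (by omega))
        have hh : (fun w => f w ^ p j) =ᶠ[nhdsWithin x {x}ᶜ]
            fun z => (z - x) ^ (-((m i * p j : ℕ) : ℤ)) * (fun z => gi z ^ p j) z := by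
          filter_upwards [self_mem_nhdsWithin] with z (hz : z ≠ x)
          exact hpow (p j) z hz
        obtain ⟨G, hGa, hGx, hGe⟩ := aux_pole_iter x (m i * p j) hN
          (hgia.pow (p j)) (pow_ne_zero _ hgix) hh (q j)
        exact ⟨G, hGa, hGx, hGe⟩
    choose G hGa hGx hGe using hfac
    set E : ℕ := m i * p₀ + ∑ j, (m i * p j + q j) with hE
    have hrep : Qop p₀ k p q f =ᶠ[nhdsWithin x {x}ᶜ]
        fun z => (z - x) ^ (-(E : ℤ)) * (gi z ^ p₀ * ∏ j, G j z) := by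
      have hall : ∀ᶠ z in nhdsWithin x {x}ᶜ, ∀ j : Fin k,
          iteratedDeriv (q j) (fun w => f w ^ p j) z =
            (z - x) ^ (-((m i * p j + q j : ℕ) : ℤ)) * G j z :=
        eventually_all.mpr (fun j => hGe j)
      filter_upwards [hall, self_mem_nhdsWithin] with z hz (hzx : z ≠ x)
      show f z ^ p₀ * ∏ j, iteratedDeriv (q j) (fun w => f w ^ p j) z = _
      rw [hpow p₀ z hzx, Finset.prod_congr rfl (fun j _ => hz j)]
      simp only [zpow_neg, zpow_natCast]
      rw [Finset.prod_mul_distrib, Finset.prod_inv_distrib,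
        Finset.prod_pow_eq_pow_sum]
      rw [hE, pow_add, mul_inv]
      ring
    have hgan : AnalyticAt ℂ (fun z => gi z ^ p₀ * ∏ j, G j z) x :=
      (hgia.pow p₀).mul (Finset.analyticAt_fun_prod _ (fun j _ => hGa j))
    have hgne : (fun z => gi z ^ p₀ * ∏ j, G j z) x ≠ 0 := by
      apply mul_ne_zero (pow_ne_zero _ hgix)
      rw [Finset.prod_ne_zero_iff]
      exact fun j _ => hGx j
    have hmero : MeromorphicAt (Qop p₀ k p q f) x := by
      rw [MeromorphicAt.iff_eventuallyEq_zpow_smul_analyticAt]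
      exact ⟨-(E : ℤ), _, hgan, by simp only [smul_eq_mul]; exact hrep⟩
    refine ⟨hmero, ?_⟩
    have horder : meromorphicOrderAt (Qop p₀ k p q f) x = ((-(E : ℤ) : ℤ) : WithTop ℤ) :=
      (meromorphicOrderAt_eq_int_iff hmero).mpr
        ⟨_, hgan, hgne, by simp only [smul_eq_mul]; exact hrep⟩
    have hEZ : (E : ℤ) = ((m i : ℤ) - 1) * d + w := by
      rw [hE, hw, hd]
      push_cast [Finset.sum_add_distrib, ← Finset.mul_sum]
      ring
    rw [horder, hEZ]
    push_cast
    ring_nf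
  · -- Part 2: decay at infinity
    set B : ℝ := ∑ j, ‖β j‖ with hB
    have hB0 : 0 ≤ B := Finset.sum_nonneg (fun j _ => norm_nonneg _)
    have hβB : ∀ j, ‖β j‖ ≤ B := fun j =>
      Finset.single_le_sum (fun j _ => norm_nonneg (β j)) (Finset.mem_univ j)
    set R1 : ℝ := 2 * B + 2 with hR1
    have hBR : B < R1 := by rw [hR1]; linarith
    have h0R : (0:ℝ) < R1 := by rw [hR1]; linarith
    have hU : ∀ z : ℂ, B < ‖z‖ → ∀ j, z + β j ≠ 0 := by
      intro z hz j hcon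
      have : z = -β j := by linear_combination hcon
      rw [this, norm_neg] at hz
      exact absurd (hβB j) (not_le.mpr hz)
    have hfan : AnalyticOnNhd ℂ f {z : ℂ | B < ‖z‖} := by
      intro z hz
      refine analyticAt_const.div
        (Finset.analyticAt_fun_prod _ (fun j _ => (analyticAt_id.add analyticAt_const).pow _)) ?_
      rw [Finset.prod_ne_zero_iff]
      exact fun j _ => pow_ne_zero _ (hU z hz j)
    have hfd : ∀ z : ℂ, R1 ≤ ‖z‖ → ‖f z‖ ≤ ‖c‖ * 2 ^ M / ‖z‖ ^ M := by
      intro z hzR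
      have hz2 : 2 * B + 2 ≤ ‖z‖ := hzR
      have hzpos : (0:ℝ) < ‖z‖ := by linarith
      have hlow : ∀ j, ‖z‖ / 2 ≤ ‖z + β j‖ := by
        intro j
        have h1 : ‖z‖ - ‖β j‖ ≤ ‖z + β j‖ := by
          have := norm_sub_norm_le z (-β j)
          simpa [sub_neg_eq_add] using this
        have := hβB j
        linarith
      have hprod : (‖z‖ / 2) ^ M ≤ ∏ j, ‖z + β j‖ ^ m j := by
        rw [hM, ← Finset.prod_pow_eq_pow_sum]
        exact Finset.prod_le_prod (fun j _ => by positivity)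
          (fun j _ => pow_le_pow_left₀ (by positivity) (hlow j) _)
      have hfz : ‖f z‖ = ‖c‖ / ∏ j, ‖z + β j‖ ^ m j := by
        rw [hf]
        simp [norm_div, norm_prod, norm_pow]
      rw [hfz]
      calc ‖c‖ / ∏ j, ‖z + β j‖ ^ m j ≤ ‖c‖ / (‖z‖ / 2) ^ M :=
            div_le_div_of_nonneg_left (norm_nonneg c) (by positivity) hprod
        _ = ‖c‖ * 2 ^ M / ‖z‖ ^ M := by
            rw [div_pow, div_div_eq_mul_div]
      -- done
    -- decay of each factor
    have hfacd : ∀ j : Fin k, ∃ K' : ℝ, 0 ≤ K' ∧ ∀ z : ℂ, 2 ^ (q j) * R1 ≤ ‖z‖ →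
        ‖iteratedDeriv (q j) (fun w => f w ^ p j) z‖ ≤ K' / ‖z‖ ^ (M * p j + q j) := by
      intro j
      apply aux_decay B R1 hBR h0R (g := fun w => f w ^ p j)
        (fun z hz => (hfan z hz).pow _) (M * p j) ((‖c‖ * 2 ^ M) ^ p j) (by positivity)
      intro z hz
      have hzpos : (0:ℝ) < ‖z‖ := lt_of_lt_of_le (lt_of_le_of_lt hB0 hBR) hz
      calc ‖f z ^ p j‖ = ‖f z‖ ^ p j := norm_pow _ _
        _ ≤ (‖c‖ * 2 ^ M / ‖z‖ ^ M) ^ p j :=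
            pow_le_pow_left₀ (norm_nonneg _) (hfd z hz) _
        _ = (‖c‖ * 2 ^ M) ^ p j / ‖z‖ ^ (M * p j) := by
            rw [div_pow, ← pow_mul]
    choose K hK0 hKb using hfacd
    set Qs : ℕ := ∑ i, q i with hQs
    set Rfin : ℝ := 2 ^ Qs * R1 + 1 with hRfin
    refine ⟨(‖c‖ * 2 ^ M) ^ p₀ * ∏ j, K j, ?_⟩
    filter_upwards [eventually_cobounded_le_norm Rfin] with z hz
    have h2Q1 : (1:ℝ) ≤ 2 ^ Qs := one_le_pow₀ (by norm_num)
    have hz1 : (1:ℝ) ≤ ‖z‖ := by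
      have : (0:ℝ) < 2 ^ Qs * R1 := by positivity
      rw [hRfin] at hz; linarith
    have hzR1 : R1 ≤ ‖z‖ := by
      have : R1 ≤ 2 ^ Qs * R1 := le_mul_of_one_le_left h0R.le h2Q1
      rw [hRfin] at hz; linarith
    have hzpos : (0:ℝ) < ‖z‖ := by linarith
    have hzfac : ∀ j : Fin k, 2 ^ (q j) * R1 ≤ ‖z‖ := by
      intro j
      have hqle : q j ≤ Qs := Finset.single_le_sum (fun j _ => Nat.zero_le _) (Finset.mem_univ j)
      have : (2:ℝ) ^ (q j) ≤ 2 ^ Qs := pow_le_pow_right₀ (by norm_num) hqle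
      have h1 : (2:ℝ) ^ (q j) * R1 ≤ 2 ^ Qs * R1 := by nlinarith
      rw [hRfin] at hz; linarith
    -- norm bound
    set E' : ℕ := M * p₀ + ∑ j, (M * p j + q j) with hE'
    have hnorm : ‖Qop p₀ k p q f z‖ ≤ ((‖c‖ * 2 ^ M) ^ p₀ * ∏ j, K j) / ‖z‖ ^ E' := by
      have h1 : ‖Qop p₀ k p q f z‖ =
          ‖f z ^ p₀‖ * ∏ j, ‖iteratedDeriv (q j) (fun w => f w ^ p j) z‖ := by
        rw [Qop, norm_mul, norm_prod]
      rw [h1]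
      have hb0 : ‖f z ^ p₀‖ ≤ (‖c‖ * 2 ^ M) ^ p₀ / ‖z‖ ^ (M * p₀) := by
        calc ‖f z ^ p₀‖ = ‖f z‖ ^ p₀ := norm_pow _ _
          _ ≤ (‖c‖ * 2 ^ M / ‖z‖ ^ M) ^ p₀ :=
              pow_le_pow_left₀ (norm_nonneg _) (hfd z hzR1) _
          _ = (‖c‖ * 2 ^ M) ^ p₀ / ‖z‖ ^ (M * p₀) := by rw [div_pow, ← pow_mul]
      have hbprod : (∏ j, ‖iteratedDeriv (q j) (fun w => f w ^ p j) z‖) ≤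
          (∏ j, K j) / ‖z‖ ^ (∑ j, (M * p j + q j)) := by
        rw [← Finset.prod_pow_eq_pow_sum, ← Finset.prod_div_distrib]
        exact Finset.prod_le_prod (fun j _ => norm_nonneg _)
          (fun j _ => hKb j z (hzfac j))
      calc ‖f z ^ p₀‖ * ∏ j, ‖iteratedDeriv (q j) (fun w => f w ^ p j) z‖
          ≤ ((‖c‖ * 2 ^ M) ^ p₀ / ‖z‖ ^ (M * p₀)) *
            ((∏ j, K j) / ‖z‖ ^ (∑ j, (M * p j + q j))) := by
            apply mul_le_mul hb0 hbprod
              (Finset.prod_nonneg (fun j _ => norm_nonneg _)) (by positivity)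
        _ = ((‖c‖ * 2 ^ M) ^ p₀ * ∏ j, K j) / ‖z‖ ^ E' := by
            rw [div_mul_div_comm, hE', pow_add]
    refine le_trans hnorm ?_
    -- exponent comparison
    have hEeq : (E' : ℤ) = (M : ℤ) * d + ((w : ℤ) - d) := by
      rw [hE', hw, hQs, hd]
      push_cast [Finset.sum_add_distrib, ← Finset.mul_sum]
      ring
    have hwd : (0:ℤ) ≤ (w : ℤ) - d := by
      rw [hw]; push_cast; omega
    have hle : (M : ℤ) * d + ((w : ℤ) - d) - t * ((w : ℤ) - d) ≤ (E' : ℤ) := by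
      rw [hEeq]
      have : (0:ℤ) ≤ (t : ℤ) * ((w : ℤ) - d) := mul_nonneg (by positivity) hwd
      omega
    have hzp : ‖z‖ ^ ((M : ℤ) * d + ((w : ℤ) - d) - t * ((w : ℤ) - d)) ≤ ‖z‖ ^ (E' : ℤ) :=
      zpow_le_zpow_right₀ hz1 hle
    rw [show ‖z‖ ^ (E' : ℤ) = ‖z‖ ^ E' from zpow_natCast _ _] at hzp
    exact div_le_div_of_nonneg_left
      (mul_nonneg (by positivity) (Finset.prod_nonneg fun j _ => hK0 j))
      (zpow_pos hzpos _) hzp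
end
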